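/- arXiv:1403.1864 — 6 statements merged into one kernel-verified Lean document; each statement's English description precedes it below -/
import Mathlib

section
/- Let k be a field, let Ã be a commutative k-algebra with an ideal m̃ such that the composite k → Ã → Ã/m̃ is bijective, and let t ∈ m̃ be a nonzero element with t·m̃ = 0 (so t² = 0 and the ideal (t) equals k·t). Let B₀ be a commutative k-algebra and set B := B₀ ⊗_k Ã, and write B₀⊗(t) := {x ⊗ t : x ∈ B₀} ⊆ B. Suppose {-,-}₁ and {-,-}₂ are two Ã-bilinear brackets on B, each making B a Poisson Ã-algebra (antisymmetric, Jacobi, Leibniz), such that {u,v}₁ − {u,v}₂ ∈ B₀⊗(t) for all u, v ∈ B. Let {-,-}₀ denote the common induced Poisson bracket on B₀ (the image of {x⊗1, y⊗1}₁ under the reduction B → B₀ modulo B₀ ⊗ m̃), and let Λ' : B₀ × B₀ → B₀ be the unique map with {x⊗1, y⊗1}₁ − {x⊗1, y⊗1}₂ = Λ'(x,y) ⊗ t for all x, y ∈ B₀. Then the assignment P ↦ θ_P, where θ_P is the Ã-linear map B → B with θ_P(x⊗1) = x⊗1 + P(x)⊗t, is a bijection from the set of k-linear derivations P : B₀ → B₀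 (satisfying P(xy) = x·P(y) + y·P(x)) such that Λ'(x,y) = {P(x), y}₀ + {x, P(y)}₀ − P({x,y}₀) for all x, y ∈ B₀, onto the set of Ã-algebra isomorphisms θ : B → B satisfying θ({u,v}₁) = {θ(u), θ(v)}₂ and θ(u) − u ∈ B₀⊗(t) for all u, v ∈ B. -/
open scoped TensorProduct

/-- The `Ã`-linear endomorphism `θ_P` of `B = B₀ ⊗ Ã` determined by
`θ_P(x ⊗ 1) = x ⊗ 1 + P(x) ⊗ t`. -/
noncomputable def thetaFun {k Atil B₀ : Type*} [Field k] [CommRing Atil] [Algebra k Atil]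
    [CommRing B₀] [Algebra k B₀] (t : Atil) (P : B₀ →ₗ[k] B₀)
    (u : B₀ ⊗[k] Atil) : B₀ ⊗[k] Atil :=
  u + TensorProduct.map P (LinearMap.mulLeft k t) u

section AuxLemmas
variable {k Atil B₀ : Type*} [Field k] [CommRing Atil] [Algebra k Atil]
  [CommRing B₀] [Algebra k B₀]

lemma aux_tinj {t : Atil} (ht0 : t ≠ 0) (x : B₀) (h : x ⊗ₜ[k] t = 0) : x = 0 := by
  have hinj : LinearMap.ker (LinearMap.toSpanSingleton k Atil t) = ⊥ := by
    rw [LinearMap.ker_eq_bot']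
    intro c hc
    rw [LinearMap.toSpanSingleton_apply] at hc
    exact (smul_eq_zero.mp hc).resolve_right ht0
  obtain ⟨g, hg⟩ := (LinearMap.toSpanSingleton k Atil t).exists_leftInverse_of_injective hinj
  have hgt : g t = 1 := by
    have := congrArg (fun f => f (1:k)) hg
    simpa [LinearMap.toSpanSingleton_apply] using this
  have h2 : x = (TensorProduct.rid k B₀) ((LinearMap.lTensor B₀ g) (x ⊗ₜ[k] t)) := by
    simp [hgt]
  rw [h] at h2
  simpa using h2

lemma aux_tinj' {t : Atil} (ht0 : t ≠ 0) (x y : B₀) (h : x ⊗ₜ[k] t = y ⊗ₜ[k] t) : x = y := by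
  have h0 : (x - y) ⊗ₜ[k] t = 0 := by rw [TensorProduct.sub_tmul, h, sub_self]
  exact sub_eq_zero.mp (aux_tinj ht0 _ h0)

end AuxLemmas

set_option maxHeartbeats 1000000 in
/-- Over a small extension `(Ã, m̃, t)`, given two Poisson `Ã`-algebra structures `P₁`, `P₂`
on `B = B₀ ⊗ Ã` differing by elements of `B₀ ⊗ (t)`, with common induced bracket `P0` on
`B₀` and difference cocycle `Λ'`, the assignment `P ↦ θ_P` is a bijection from the
derivations `P` of `B₀` with `Λ'(x,y) = {Px,y}₀ + {x,Py}₀ − P({x,y}₀)` onto the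
`Ã`-algebra isomorphisms `θ : (B,P₁) → (B,P₂)` inducing the identity modulo `B₀ ⊗ (t)`. -/
theorem stmt0 (k Atil B₀ : Type*) [Field k] [CommRing Atil] [Algebra k Atil]
    [CommRing B₀] [Algebra k B₀]
    (mtil : Ideal Atil)
    (hres : Function.Bijective ((Ideal.Quotient.mk mtil).comp (algebraMap k Atil)))
    (t : Atil) (htmem : t ∈ mtil) (ht0 : t ≠ 0) (htann : ∀ x ∈ mtil, t * x = 0)
    (P₁ P₂ : B₀ ⊗[k] Atil → B₀ ⊗[k] Atil → B₀ ⊗[k] Atil)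
    -- `P₁` is an `Ã`-bilinear Poisson bracket
    (h₁addl : ∀ u v w : B₀ ⊗[k] Atil, P₁ (u + v) w = P₁ u w + P₁ v w)
    (h₁addr : ∀ u v w : B₀ ⊗[k] Atil, P₁ u (v + w) = P₁ u v + P₁ u w)
    (h₁linl : ∀ (a : Atil) (u v : B₀ ⊗[k] Atil),
      P₁ (((1 : B₀) ⊗ₜ[k] a) * u) v = ((1 : B₀) ⊗ₜ[k] a) * P₁ u v)
    (h₁linr : ∀ (a : Atil) (u v : B₀ ⊗[k] Atil),
      P₁ u (((1 : B₀) ⊗ₜ[k] a) * v) = ((1 : B₀) ⊗ₜ[k] a) * P₁ u v)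
    (h₁anti : ∀ u v : B₀ ⊗[k] Atil, P₁ u v = -P₁ v u)
    (h₁jac : ∀ u v w : B₀ ⊗[k] Atil, P₁ u (P₁ v w) = P₁ (P₁ u v) w + P₁ v (P₁ u w))
    (h₁leib : ∀ u v w : B₀ ⊗[k] Atil, P₁ u (v * w) = v * P₁ u w + w * P₁ u v)
    -- `P₂` is an `Ã`-bilinear Poisson bracket
    (h₂addl : ∀ u v w : B₀ ⊗[k] Atil, P₂ (u + v) w = P₂ u w + P₂ v w)
    (h₂addr : ∀ u v w : B₀ ⊗[k] Atil, P₂ u (v + w) = P₂ u v + P₂ u w)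
    (h₂linl : ∀ (a : Atil) (u v : B₀ ⊗[k] Atil),
      P₂ (((1 : B₀) ⊗ₜ[k] a) * u) v = ((1 : B₀) ⊗ₜ[k] a) * P₂ u v)
    (h₂linr : ∀ (a : Atil) (u v : B₀ ⊗[k] Atil),
      P₂ u (((1 : B₀) ⊗ₜ[k] a) * v) = ((1 : B₀) ⊗ₜ[k] a) * P₂ u v)
    (h₂anti : ∀ u v : B₀ ⊗[k] Atil, P₂ u v = -P₂ v u)
    (h₂jac : ∀ u v w : B₀ ⊗[k] Atil, P₂ u (P₂ v w) = P₂ (P₂ u v) w + P₂ v (P₂ u w))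
    (h₂leib : ∀ u v w : B₀ ⊗[k] Atil, P₂ u (v * w) = v * P₂ u w + w * P₂ u v)
    -- the two brackets differ by elements of `B₀ ⊗ (t)`
    (hdiff : ∀ u v : B₀ ⊗[k] Atil,
      P₁ u v - P₂ u v ∈ {w : B₀ ⊗[k] Atil | ∃ x : B₀, w = x ⊗ₜ[k] t})
    -- `P0` is the common induced Poisson bracket on `B₀` (modulo `B₀ ⊗ m̃`)
    (P0 : B₀ → B₀ → B₀)
    (hP0 : ∀ x y : B₀,
      P₁ (x ⊗ₜ[k] 1) (y ⊗ₜ[k] 1) - P0 x y ⊗ₜ[k] 1 ∈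
        Submodule.span k {w : B₀ ⊗[k] Atil | ∃ (z : B₀) (a : Atil), a ∈ mtil ∧ w = z ⊗ₜ[k] a})
    -- `Λ'` measures the difference of the two brackets
    (Λ' : B₀ → B₀ → B₀)
    (hΛ' : ∀ x y : B₀,
      P₁ (x ⊗ₜ[k] 1) (y ⊗ₜ[k] 1) - P₂ (x ⊗ₜ[k] 1) (y ⊗ₜ[k] 1) = Λ' x y ⊗ₜ[k] t) :
    -- (1) for each admissible derivation `P`, `θ_P` is an `Ã`-algebra isomorphism
    --     `(B,P₁) → (B,P₂)` inducing the identity modulo `B₀ ⊗ (t)`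
    (∀ P : B₀ →ₗ[k] B₀,
      (∀ x y : B₀, P (x * y) = x * P y + y * P x) →
      (∀ x y : B₀, Λ' x y = P0 (P x) y + P0 x (P y) - P (P0 x y)) →
      (∀ x : B₀, thetaFun t P (x ⊗ₜ[k] 1) = x ⊗ₜ[k] 1 + P x ⊗ₜ[k] t) ∧
      Function.Bijective (thetaFun t P) ∧
      (∀ u v : B₀ ⊗[k] Atil, thetaFun t P (u * v) = thetaFun t P u * thetaFun t P v) ∧
      (∀ a : Atil, thetaFun t P ((1 : B₀) ⊗ₜ[k] a) = (1 : B₀) ⊗ₜ[k] a) ∧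
      (∀ u v : B₀ ⊗[k] Atil,
        thetaFun t P (P₁ u v) = P₂ (thetaFun t P u) (thetaFun t P v)) ∧
      (∀ u : B₀ ⊗[k] Atil,
        thetaFun t P u - u ∈ {w : B₀ ⊗[k] Atil | ∃ x : B₀, w = x ⊗ₜ[k] t})) ∧
    -- (2) every such isomorphism is `θ_P` for a unique admissible derivation `P`
    (∀ θ : B₀ ⊗[k] Atil ≃+* B₀ ⊗[k] Atil,
      (∀ a : Atil, θ ((1 : B₀) ⊗ₜ[k] a) = (1 : B₀) ⊗ₜ[k] a) →
      (∀ u v : B₀ ⊗[k] Atil, θ (P₁ u v) = P₂ (θ u) (θ v)) →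
      (∀ u : B₀ ⊗[k] Atil, θ u - u ∈ {w : B₀ ⊗[k] Atil | ∃ x : B₀, w = x ⊗ₜ[k] t}) →
      ∃! P : B₀ →ₗ[k] B₀,
        (∀ x y : B₀, P (x * y) = x * P y + y * P x) ∧
        (∀ x y : B₀, Λ' x y = P0 (P x) y + P0 x (P y) - P (P0 x y)) ∧
        (∀ x : B₀, θ (x ⊗ₜ[k] 1) = x ⊗ₜ[k] 1 + P x ⊗ₜ[k] t)) := by
  classical
  have htt : t * t = 0 := htann t htmem
  have hta : ∀ a : Atil, ∃ c : k, t * a = c • t := by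
    intro a
    obtain ⟨c, hc⟩ := hres.2 (Ideal.Quotient.mk mtil a)
    have hm : algebraMap k Atil c - a ∈ mtil := by
      rw [← Ideal.Quotient.eq]; exact hc
    refine ⟨c, ?_⟩
    have h0 := htann _ hm
    rw [mul_sub, sub_eq_zero] at h0
    rw [← h0, Algebra.smul_def, mul_comm]
  have htmul : ∀ z : B₀, ((1:B₀) ⊗ₜ[k] t) * (z ⊗ₜ[k] (1:Atil)) = z ⊗ₜ[k] t := by
    intro z; rw [Algebra.TensorProduct.tmul_mul_tmul, one_mul, mul_one]
  have hmulM : ∀ m ∈ Submodule.span k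
      {w : B₀ ⊗[k] Atil | ∃ (z : B₀) (a : Atil), a ∈ mtil ∧ w = z ⊗ₜ[k] a},
      ((1:B₀) ⊗ₜ[k] t) * m = 0 := by
    intro m hm
    induction hm using Submodule.span_induction with
    | mem w hw =>
      obtain ⟨z, a, ha, rfl⟩ := hw
      rw [Algebra.TensorProduct.tmul_mul_tmul, one_mul, htann a ha, TensorProduct.tmul_zero]
    | zero => rw [mul_zero]
    | add x y hx hy ihx ihy => rw [mul_add, ihx, ihy, add_zero]
    | smul c x hx ihx => rw [mul_smul_comm, ihx, smul_zero]
  have hP0₂ : ∀ x y : B₀, P₂ (x ⊗ₜ[k] 1) (y ⊗ₜ[k] 1) - P0 x y ⊗ₜ[k] 1 ∈ Submodule.span k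
      {w : B₀ ⊗[k] Atil | ∃ (z : B₀) (a : Atil), a ∈ mtil ∧ w = z ⊗ₜ[k] a} := by
    intro x y
    have h1 : P₂ (x ⊗ₜ[k] 1) (y ⊗ₜ[k] 1) - P0 x y ⊗ₜ[k] 1
        = (P₁ (x ⊗ₜ[k] 1) (y ⊗ₜ[k] 1) - P0 x y ⊗ₜ[k] 1) - Λ' x y ⊗ₜ[k] t := by
      rw [← hΛ' x y]; ring
    rw [h1]
    exact sub_mem (hP0 x y) (Submodule.subset_span ⟨Λ' x y, t, htmem, rfl⟩)
  have hbrt₂r : ∀ x z : B₀, P₂ (x ⊗ₜ[k] 1) (z ⊗ₜ[k] t) = P0 x z ⊗ₜ[k] t := by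
    intro x z
    rw [← htmul z, h₂linr]
    have hsplit : P₂ (x ⊗ₜ[k] 1) (z ⊗ₜ[k] 1)
        = P0 x z ⊗ₜ[k] 1 + (P₂ (x ⊗ₜ[k] 1) (z ⊗ₜ[k] 1) - P0 x z ⊗ₜ[k] 1) := by ring
    rw [hsplit, mul_add, hmulM _ (hP0₂ x z), add_zero, htmul]
  have hbrt₂l : ∀ z x : B₀, P₂ (z ⊗ₜ[k] t) (x ⊗ₜ[k] 1) = P0 z x ⊗ₜ[k] t := by
    intro z x
    rw [← htmul z, h₂linl]
    have hsplit : P₂ (z ⊗ₜ[k] 1) (x ⊗ₜ[k] 1)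
        = P0 z x ⊗ₜ[k] 1 + (P₂ (z ⊗ₜ[k] 1) (x ⊗ₜ[k] 1) - P0 z x ⊗ₜ[k] 1) := by ring
    rw [hsplit, mul_add, hmulM _ (hP0₂ z x), add_zero, htmul]
  have hbrtt₂ : ∀ z w : B₀, P₂ (z ⊗ₜ[k] t) (w ⊗ₜ[k] t) = 0 := by
    intro z w
    rw [← htmul z, h₂linl, hbrt₂r, Algebra.TensorProduct.tmul_mul_tmul, one_mul, htt,
      TensorProduct.tmul_zero]
  have h₁zeror : ∀ u, P₁ u 0 = 0 := by
    intro u; have h := h₁addr u 0 0; rw [add_zero] at h; exact right_eq_add.mp h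
  have h₁zerol : ∀ u, P₁ 0 u = 0 := by
    intro u; have h := h₁addl 0 0 u; rw [add_zero] at h; exact right_eq_add.mp h
  have h₂zeror : ∀ u, P₂ u 0 = 0 := by
    intro u; have h := h₂addr u 0 0; rw [add_zero] at h; exact right_eq_add.mp h
  have h₂zerol : ∀ u, P₂ 0 u = 0 := by
    intro u; have h := h₂addl 0 0 u; rw [add_zero] at h; exact right_eq_add.mp h
  constructor
  · -- Part (1)
    intro P hder hcoc
    set D := TensorProduct.map P (LinearMap.mulLeft k t) with hDdef
    have hθeq : ∀ u, thetaFun t P u = u + D u := fun u => rfl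
    have hD : ∀ (x : B₀) (a : Atil), D (x ⊗ₜ[k] a) = P x ⊗ₜ[k] (t * a) := by
      intro x a; rw [hDdef]; simp
    have hP1 : P 1 = 0 := by
      have h := hder 1 1
      rw [mul_one, one_mul] at h
      exact right_eq_add.mp h
    have hDD : ∀ u, D (D u) = 0 := by
      intro u
      induction u using TensorProduct.induction_on with
      | zero => simp
      | tmul x a => rw [hD, hD, ← mul_assoc, htt, zero_mul, TensorProduct.tmul_zero]
      | add u v ihu ihv => rw [map_add, map_add, ihu, ihv, add_zero]
    have hDAlin : ∀ (a : Atil) (u : B₀ ⊗[k] Atil),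
        D (((1:B₀) ⊗ₜ[k] a) * u) = ((1:B₀) ⊗ₜ[k] a) * D u := by
      intro a u
      induction u using TensorProduct.induction_on with
      | zero => simp
      | tmul x b =>
        simp only [Algebra.TensorProduct.tmul_mul_tmul, one_mul, hD]
        rw [show a * (t * b) = t * (a * b) by ring]
      | add u v ihu ihv => rw [mul_add, map_add, map_add, mul_add, ihu, ihv]
    have hDzero : ∀ u v, D u * D v = 0 := by
      intro u v
      induction u using TensorProduct.induction_on with
      | zero => simp
      | tmul x a =>
        induction v using TensorProduct.induction_on with
        | zero => simp
        | tmul y b =>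
          rw [hD, hD, Algebra.TensorProduct.tmul_mul_tmul,
            show (t * a) * (t * b) = (t * t) * (a * b) by ring, htt, zero_mul,
            TensorProduct.tmul_zero]
        | add v w ihv ihw => rw [map_add, mul_add, ihv, ihw, add_zero]
      | add u w ihu ihw => rw [map_add, add_mul, ihu, ihw, add_zero]
    have hDder : ∀ u v, D (u * v) = u * D v + v * D u := by
      intro u v
      induction v using TensorProduct.induction_on with
      | zero => simp
      | tmul y b =>
        induction u using TensorProduct.induction_on with
        | zero => simp
        | tmul x a =>
          simp only [Algebra.TensorProduct.tmul_mul_tmul, hD, hder x y,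
            TensorProduct.add_tmul]
          rw [show a * (t * b) = t * (a * b) by ring,
            show b * (t * a) = t * (a * b) by ring]
        | add u w ihu ihw =>
          rw [add_mul, map_add, map_add, ihu, ihw, add_mul]
          ring
      | add v w ihv ihw =>
        rw [mul_add, map_add, map_add, ihv, ihw]
        ring
    have hDM : ∀ m ∈ Submodule.span k
        {w : B₀ ⊗[k] Atil | ∃ (z : B₀) (a : Atil), a ∈ mtil ∧ w = z ⊗ₜ[k] a},
        D m = 0 := by
      intro m hm
      induction hm using Submodule.span_induction with
      | mem w hw =>
        obtain ⟨z, a, ha, rfl⟩ := hw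
        rw [hD, htann a ha, TensorProduct.tmul_zero]
      | zero => exact map_zero D
      | add x y hx hy ihx ihy => rw [map_add, ihx, ihy, add_zero]
      | smul c x hx ihx => rw [map_smul, ihx, smul_zero]
    have hDS : ∀ u, ∃ x : B₀, D u = x ⊗ₜ[k] t := by
      intro u
      induction u using TensorProduct.induction_on with
      | zero => exact ⟨0, by simp⟩
      | tmul x a =>
        obtain ⟨c, hc⟩ := hta a
        exact ⟨c • P x, by rw [hD, hc, TensorProduct.smul_tmul]⟩
      | add u v ihu ihv =>
        obtain ⟨x, hx⟩ := ihu
        obtain ⟨y, hy⟩ := ihv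
        exact ⟨x + y, by rw [map_add, hx, hy, TensorProduct.add_tmul]⟩
    have hbase : ∀ x y : B₀,
        D (P₁ (x ⊗ₜ[k] 1) (y ⊗ₜ[k] 1))
            + (P₁ (x ⊗ₜ[k] 1) (y ⊗ₜ[k] 1) - P₂ (x ⊗ₜ[k] 1) (y ⊗ₜ[k] 1))
          = P₂ (D (x ⊗ₜ[k] 1)) (y ⊗ₜ[k] 1) + P₂ (x ⊗ₜ[k] 1) (D (y ⊗ₜ[k] 1)) := by
      intro x y
      have hDE : D (P₁ (x ⊗ₜ[k] 1) (y ⊗ₜ[k] 1)) = P (P0 x y) ⊗ₜ[k] t := by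
        have hsplit : P₁ (x ⊗ₜ[k] 1) (y ⊗ₜ[k] 1)
            = P0 x y ⊗ₜ[k] 1 + (P₁ (x ⊗ₜ[k] 1) (y ⊗ₜ[k] 1) - P0 x y ⊗ₜ[k] 1) := by ring
        rw [hsplit, map_add, hDM _ (hP0 x y), add_zero, hD, mul_one]
      have hDx : D (x ⊗ₜ[k] (1:Atil)) = P x ⊗ₜ[k] t := by rw [hD, mul_one]
      have hDy : D (y ⊗ₜ[k] (1:Atil)) = P y ⊗ₜ[k] t := by rw [hD, mul_one]
      rw [hDE, hΛ' x y, hDx, hDy, hbrt₂l, hbrt₂r, ← TensorProduct.add_tmul,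
        ← TensorProduct.add_tmul]
      congr 1
      rw [hcoc x y]; ring
    have hstep : ∀ (x : B₀) (v : B₀ ⊗[k] Atil),
        D (P₁ (x ⊗ₜ[k] 1) v) + (P₁ (x ⊗ₜ[k] 1) v - P₂ (x ⊗ₜ[k] 1) v)
          = P₂ (D (x ⊗ₜ[k] 1)) v + P₂ (x ⊗ₜ[k] 1) (D v) := by
      intro x v
      induction v using TensorProduct.induction_on with
      | zero => simp [h₁zeror, h₂zeror]
      | tmul y b =>
        have hyb : y ⊗ₜ[k] b = ((1:B₀) ⊗ₜ[k] b) * (y ⊗ₜ[k] (1:Atil)) := by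
          rw [Algebra.TensorProduct.tmul_mul_tmul, one_mul, mul_one]
        rw [hyb]
        simp only [h₁linr, h₂linr, hDAlin]
        linear_combination ((1:B₀) ⊗ₜ[k] b) * hbase x y
      | add v w ihv ihw =>
        simp only [h₁addr, h₂addr, map_add]
        linear_combination ihv + ihw
    have hkey : ∀ u v : B₀ ⊗[k] Atil,
        D (P₁ u v) + (P₁ u v - P₂ u v) = P₂ (D u) v + P₂ u (D v) := by
      intro u v
      induction u using TensorProduct.induction_on with
      | zero => simp [h₁zerol, h₂zerol]
      | tmul x a =>
        have hxa : x ⊗ₜ[k] a = ((1:B₀) ⊗ₜ[k] a) * (x ⊗ₜ[k] (1:Atil)) := by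
          rw [Algebra.TensorProduct.tmul_mul_tmul, one_mul, mul_one]
        rw [hxa]
        simp only [h₁linl, h₂linl, hDAlin]
        linear_combination ((1:B₀) ⊗ₜ[k] a) * hstep x v
      | add u w ihu ihw =>
        simp only [h₁addl, h₂addl, map_add]
        linear_combination ihu + ihw
    refine ⟨?_, ?_, ?_, ?_, ?_, ?_⟩
    · intro x
      rw [hθeq, hD, mul_one]
    · rw [Function.bijective_iff_has_inverse]
      refine ⟨fun u => u - D u, fun u => ?_, fun u => ?_⟩
      · show thetaFun t P u - D (thetaFun t P u) = u
        rw [hθeq, map_add, hDD, add_zero]; ring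
      · show thetaFun t P (u - D u) = u
        rw [hθeq, map_sub, hDD, sub_zero]; ring
    · intro u v
      rw [hθeq, hθeq, hθeq, hDder]
      linear_combination -hDzero u v
    · intro a
      rw [hθeq, hD, hP1, TensorProduct.zero_tmul, add_zero]
    · intro u v
      rw [hθeq, hθeq, hθeq, h₂addl, h₂addr, h₂addr]
      have h4 : P₂ (D u) (D v) = 0 := by
        obtain ⟨x, hx⟩ := hDS u
        obtain ⟨y, hy⟩ := hDS v
        rw [hx, hy, hbrtt₂]
      linear_combination hkey u v - h4
    · intro u
      obtain ⟨x, hx⟩ := hDS u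
      exact ⟨x, by rw [hθeq, add_sub_cancel_left, hx]⟩
  · -- Part (2)
    intro θ hθalg hθpois hθid
    have hex : ∀ x : B₀, ∃ y : B₀, θ (x ⊗ₜ[k] (1:Atil)) - x ⊗ₜ[k] 1 = y ⊗ₜ[k] t :=
      fun x => hθid (x ⊗ₜ[k] 1)
    choose p hp using hex
    have hp' : ∀ x : B₀, θ (x ⊗ₜ[k] (1:Atil)) = x ⊗ₜ[k] 1 + p x ⊗ₜ[k] t :=
      fun x => sub_eq_iff_eq_add'.mp (hp x)
    have hscal : ∀ (c : k) (u : B₀ ⊗[k] Atil),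
        c • u = ((1:B₀) ⊗ₜ[k] algebraMap k Atil c) * u := by
      intro c u
      have h : (1:B₀) ⊗ₜ[k] algebraMap k Atil c = c • (1 : B₀ ⊗[k] Atil) := by
        rw [Algebra.TensorProduct.one_def, Algebra.algebraMap_eq_smul_one,
          TensorProduct.tmul_smul]
      rw [h, smul_mul_assoc, one_mul]
    have hθsmul : ∀ (c : k) (u : B₀ ⊗[k] Atil), θ (c • u) = c • θ u := by
      intro c u
      rw [hscal, map_mul, hθalg, ← hscal]
    have hpadd : ∀ x y : B₀, p (x + y) = p x + p y := by
      intro x y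
      apply aux_tinj' (k := k) ht0
      have h1 := hp' (x + y)
      rw [TensorProduct.add_tmul, map_add, hp' x, hp' y] at h1
      rw [TensorProduct.add_tmul]
      linear_combination -h1
    have hpsmul : ∀ (c : k) (x : B₀), p (c • x) = c • p x := by
      intro c x
      apply aux_tinj' (k := k) ht0
      have h2 : θ ((c • x) ⊗ₜ[k] (1:Atil)) = (c • x) ⊗ₜ[k] 1 + (c • p x) ⊗ₜ[k] t := by
        rw [← TensorProduct.smul_tmul', hθsmul, hp' x, smul_add, TensorProduct.smul_tmul',
          TensorProduct.smul_tmul']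
      rw [hp' (c • x)] at h2
      exact add_left_cancel h2
    have hpmul : ∀ x y : B₀, p (x * y) = x * p y + y * p x := by
      intro x y
      apply aux_tinj' (k := k) ht0
      have h2 : θ ((x * y) ⊗ₜ[k] (1:Atil)) = θ (x ⊗ₜ[k] 1) * θ (y ⊗ₜ[k] 1) := by
        rw [← map_mul]
        congr 1
        rw [Algebra.TensorProduct.tmul_mul_tmul, mul_one]
      rw [hp' (x * y), hp' x, hp' y] at h2
      simp only [add_mul, mul_add, Algebra.TensorProduct.tmul_mul_tmul, one_mul, mul_one,
        htt, TensorProduct.tmul_zero, add_zero] at h2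
      rw [TensorProduct.add_tmul, mul_comm y (p x)]
      linear_combination h2
    have hθM : ∀ m ∈ Submodule.span k
        {w : B₀ ⊗[k] Atil | ∃ (z : B₀) (a : Atil), a ∈ mtil ∧ w = z ⊗ₜ[k] a},
        θ m = m := by
      intro m hm
      induction hm using Submodule.span_induction with
      | mem w hw =>
        obtain ⟨z, a, ha, rfl⟩ := hw
        have hza : z ⊗ₜ[k] a = ((1:B₀) ⊗ₜ[k] a) * (z ⊗ₜ[k] (1:Atil)) := by
          rw [Algebra.TensorProduct.tmul_mul_tmul, one_mul, mul_one]
        conv_lhs => rw [hza]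
        rw [map_mul, hθalg, hp' z, mul_add, Algebra.TensorProduct.tmul_mul_tmul,
          Algebra.TensorProduct.tmul_mul_tmul, one_mul, one_mul, mul_one,
          mul_comm a t, htann a ha, TensorProduct.tmul_zero, add_zero]
      | zero => exact map_zero θ
      | add x y hx hy ihx ihy => rw [map_add, ihx, ihy]
      | smul c x hx ihx => rw [hθsmul, ihx]
    have hcocp : ∀ x y : B₀, Λ' x y = P0 (p x) y + P0 x (p y) - p (P0 x y) := by
      intro x y
      apply aux_tinj' (k := k) ht0
      have h1 : θ (P₁ (x ⊗ₜ[k] 1) (y ⊗ₜ[k] 1))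
          = P₁ (x ⊗ₜ[k] 1) (y ⊗ₜ[k] 1) + p (P0 x y) ⊗ₜ[k] t := by
        have hsplit : P₁ (x ⊗ₜ[k] 1) (y ⊗ₜ[k] 1)
            = P0 x y ⊗ₜ[k] 1 + (P₁ (x ⊗ₜ[k] 1) (y ⊗ₜ[k] 1) - P0 x y ⊗ₜ[k] 1) := by ring
        conv_lhs => rw [hsplit]
        rw [map_add, hp', hθM _ (hP0 x y)]
        ring
      have h2 := hθpois (x ⊗ₜ[k] 1) (y ⊗ₜ[k] 1)
      rw [h1, hp' x, hp' y, h₂addl, h₂addr, h₂addr, hbrt₂r, hbrt₂l, hbrtt₂] at h2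
      rw [TensorProduct.sub_tmul, TensorProduct.add_tmul]
      linear_combination h2 - hΛ' x y
    refine ⟨{ toFun := p, map_add' := hpadd, map_smul' := hpsmul }, ⟨hpmul, hcocp, hp'⟩, ?_⟩
    intro Q hQ
    ext x
    apply aux_tinj' (k := k) ht0
    show Q x ⊗ₜ[k] t = p x ⊗ₜ[k] t
    linear_combination hp' x - hQ.2.2 x
end

section
/- Let k be a field, let Ã be a commutative k-algebra with an ideal m̃ such that the composite k → Ã → Ã/m̃ is bijective, and let t ∈ m̃ be a nonzero element with t·m̃ = 0 (so t² = 0 and the ideal (t) equals k·t). Let B₀ be a commutative k-algebra, set B := B₀ ⊗_k Ã and B₀⊗(t) := {x ⊗ t : x ∈ B₀} ⊆ B, and let {-,-} be an Ã-bilinear bracket making B a Poisson Ã-algebra, with induced Poisson bracket {-,-}₀ on B₀. Then the set of Ã-algebra automorphisms θ of B satisfying θ({u,v}) = {θ(u), θ(v)} and θ(u) − u ∈ B₀⊗(t) for all u, v ∈ B forms a group under composition, and the assignment P ↦ θ_P, where θ_P is the Ã-linear map with θ_P(x⊗1) = x⊗1 + P(x)⊗t, is a group isomorphism onto this group from the additive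 group of k-linear derivations P : B₀ → B₀ satisfying P({x,y}₀) = {P(x), y}₀ + {x, P(y)}₀ for all x, y ∈ B₀ (the Poisson k-derivations of B₀). -/
open scoped TensorProduct

/-- The condition that a ring automorphism `θ` of `B = B₀ ⊗ Ã` is an `Ã`-algebra
automorphism which is a Poisson automorphism of `(B, P)` and induces the identity
modulo `B₀ ⊗ (t)`. -/
def SCond {k Atil B₀ : Type*} [Field k] [CommRing Atil] [Algebra k Atil]
    [CommRing B₀] [Algebra k B₀] (t : Atil)
    (P : B₀ ⊗[k] Atil → B₀ ⊗[k] Atil → B₀ ⊗[k] Atil)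
    (θ : B₀ ⊗[k] Atil ≃+* B₀ ⊗[k] Atil) : Prop :=
  (∀ a : Atil, θ ((1 : B₀) ⊗ₜ[k] a) = (1 : B₀) ⊗ₜ[k] a) ∧
  (∀ u v : B₀ ⊗[k] Atil, θ (P u v) = P (θ u) (θ v)) ∧
  (∀ u : B₀ ⊗[k] Atil, θ u - u ∈ {w : B₀ ⊗[k] Atil | ∃ x : B₀, w = x ⊗ₜ[k] t})

/-- The condition that `P : B₀ → B₀` is a Poisson `k`-derivation of `(B₀, P0)`: it is a
derivation for the product and for the Poisson bracket. -/
def DCond {k B₀ : Type*} [Field k] [CommRing B₀] [Algebra k B₀]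
    (P0 : B₀ → B₀ → B₀) (P : B₀ →ₗ[k] B₀) : Prop :=
  (∀ x y : B₀, P (x * y) = x * P y + y * P x) ∧
  (∀ x y : B₀, P (P0 x y) = P0 (P x) y + P0 x (P y))
section EpsAux

/-- The residue map `Ã → k` inverse to `k → Ã/m̃`. -/
noncomputable def eps {k Atil : Type*} [Field k] [CommRing Atil] [Algebra k Atil]
    (mtil : Ideal Atil)
    (hres : Function.Bijective ((Ideal.Quotient.mk mtil).comp (algebraMap k Atil))) :
    Atil →ₗ[k] k where
  toFun a := (RingEquiv.ofBijective _ hres).symm (Ideal.Quotient.mk mtil a)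
  map_add' a b := by simp [map_add]
  map_smul' c a := by
    simp only [RingHom.id_apply, smul_eq_mul, Algebra.smul_def, map_mul]
    congr 1
    exact (RingEquiv.ofBijective _ hres).symm_apply_apply c

variable {k Atil : Type*} [Field k] [CommRing Atil] [Algebra k Atil]
    (mtil : Ideal Atil)
    (hres : Function.Bijective ((Ideal.Quotient.mk mtil).comp (algebraMap k Atil)))

theorem eps_algebraMap (c : k) : eps mtil hres (algebraMap k Atil c) = c :=
  (RingEquiv.ofBijective _ hres).symm_apply_apply c

theorem eps_one : eps mtil hres 1 = 1 := by
  simpa using eps_algebraMap mtil hres 1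

theorem eps_mem {a : Atil} (ha : a ∈ mtil) : eps mtil hres a = 0 := by
  show (RingEquiv.ofBijective _ hres).symm (Ideal.Quotient.mk mtil a) = 0
  rw [Ideal.Quotient.eq_zero_iff_mem.mpr ha, map_zero]

theorem sub_eps_mem (a : Atil) : a - algebraMap k Atil (eps mtil hres a) ∈ mtil := by
  rw [← Ideal.Quotient.eq_zero_iff_mem, map_sub]
  have h : (Ideal.Quotient.mk mtil) (algebraMap k Atil (eps mtil hres a))
      = (RingEquiv.ofBijective _ hres) (eps mtil hres a) := rfl
  rw [h]
  show _ - (RingEquiv.ofBijective _ hres) ((RingEquiv.ofBijective _ hres).symm _) = 0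
  rw [RingEquiv.apply_symm_apply, sub_self]

theorem t_mul_eq {t : Atil} (htann : ∀ x ∈ mtil, t * x = 0) (a : Atil) :
    t * a = eps mtil hres a • t := by
  have h1 : t * (a - algebraMap k Atil (eps mtil hres a)) = 0 :=
    htann _ (sub_eps_mem mtil hres a)
  have h2 : t * a = t * algebraMap k Atil (eps mtil hres a) := by
    have h3 := mul_sub t a (algebraMap k Atil (eps mtil hres a))
    rw [h1] at h3
    exact sub_eq_zero.mp h3.symm
  rw [h2, mul_comm, ← Algebra.smul_def]

end EpsAux
set_option maxHeartbeats 2000000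


/-- Over a small extension `(Ã, m̃, t)` and a Poisson `Ã`-algebra structure `P` on
`B = B₀ ⊗ Ã` with induced bracket `P0` on `B₀`: the Poisson `Ã`-algebra automorphisms of
`(B, P)` inducing the identity modulo `B₀ ⊗ (t)` form a group under composition, and
`P ↦ θ_P` is a group isomorphism onto this group from the additive group of Poisson
`k`-derivations of `(B₀, P0)`. -/
theorem stmt1 (k Atil B₀ : Type*) [Field k] [CommRing Atil] [Algebra k Atil]
    [CommRing B₀] [Algebra k B₀]
    (mtil : Ideal Atil)
    (hres : Function.Bijective ((Ideal.Quotient.mk mtil).comp (algebraMap k Atil)))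
    (t : Atil) (htmem : t ∈ mtil) (ht0 : t ≠ 0) (htann : ∀ x ∈ mtil, t * x = 0)
    (P : B₀ ⊗[k] Atil → B₀ ⊗[k] Atil → B₀ ⊗[k] Atil)
    -- `P` is an `Ã`-bilinear Poisson bracket on `B = B₀ ⊗ Ã`
    (haddl : ∀ u v w : B₀ ⊗[k] Atil, P (u + v) w = P u w + P v w)
    (haddr : ∀ u v w : B₀ ⊗[k] Atil, P u (v + w) = P u v + P u w)
    (hlinl : ∀ (a : Atil) (u v : B₀ ⊗[k] Atil),
      P (((1 : B₀) ⊗ₜ[k] a) * u) v = ((1 : B₀) ⊗ₜ[k] a) * P u v)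
    (hlinr : ∀ (a : Atil) (u v : B₀ ⊗[k] Atil),
      P u (((1 : B₀) ⊗ₜ[k] a) * v) = ((1 : B₀) ⊗ₜ[k] a) * P u v)
    (hanti : ∀ u v : B₀ ⊗[k] Atil, P u v = -P v u)
    (hjac : ∀ u v w : B₀ ⊗[k] Atil, P u (P v w) = P (P u v) w + P v (P u w))
    (hleib : ∀ u v w : B₀ ⊗[k] Atil, P u (v * w) = v * P u w + w * P u v)
    -- `P0` is the induced Poisson bracket on `B₀` (modulo `B₀ ⊗ m̃`)
    (P0 : B₀ → B₀ → B₀)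
    (hP0 : ∀ x y : B₀,
      P (x ⊗ₜ[k] 1) (y ⊗ₜ[k] 1) - P0 x y ⊗ₜ[k] 1 ∈
        Submodule.span k {w : B₀ ⊗[k] Atil | ∃ (z : B₀) (a : Atil), a ∈ mtil ∧ w = z ⊗ₜ[k] a}) :
    -- the automorphisms in question form a group under composition
    (SCond t P (RingEquiv.refl (B₀ ⊗[k] Atil))) ∧
    (∀ θ₁ θ₂ : B₀ ⊗[k] Atil ≃+* B₀ ⊗[k] Atil,
      SCond t P θ₁ → SCond t P θ₂ → SCond t P (θ₁.trans θ₂)) ∧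
    (∀ θ : B₀ ⊗[k] Atil ≃+* B₀ ⊗[k] Atil, SCond t P θ → SCond t P θ.symm) ∧
    -- the Poisson `k`-derivations of `B₀` form an additive group
    (DCond P0 (0 : B₀ →ₗ[k] B₀)) ∧
    (∀ P' Q' : B₀ →ₗ[k] B₀, DCond P0 P' → DCond P0 Q' → DCond P0 (P' + Q')) ∧
    (∀ P' : B₀ →ₗ[k] B₀, DCond P0 P' → DCond P0 (-P')) ∧
    -- `P ↦ θ_P` is a homomorphism: it sends sums to compositions
    (∀ P' Q' : B₀ →ₗ[k] B₀, DCond P0 P' → DCond P0 Q' →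
      ∀ u : B₀ ⊗[k] Atil, thetaFun t (P' + Q') u = thetaFun t P' (thetaFun t Q' u)) ∧
    -- `P ↦ θ_P` lands in the group of automorphisms in question
    (∀ P' : B₀ →ₗ[k] B₀, DCond P0 P' →
      ∃ θ : B₀ ⊗[k] Atil ≃+* B₀ ⊗[k] Atil,
        (∀ u : B₀ ⊗[k] Atil, θ u = thetaFun t P' u) ∧ SCond t P θ) ∧
    -- and `P ↦ θ_P` is bijective onto that group
    (∀ θ : B₀ ⊗[k] Atil ≃+* B₀ ⊗[k] Atil, SCond t P θ →
      ∃! P' : B₀ →ₗ[k] B₀, DCond P0 P' ∧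
        ∀ x : B₀, θ (x ⊗ₜ[k] 1) = x ⊗ₜ[k] 1 + P' x ⊗ₜ[k] t) := by
  classical
  have httz : ((1:B₀) ⊗ₜ[k] t) * ((1:B₀) ⊗ₜ[k] t) = (0 : B₀ ⊗[k] Atil) := by
    rw [Algebra.TensorProduct.tmul_mul_tmul, htann t htmem, TensorProduct.tmul_zero]
  have hsmul : ∀ (c : k) (u : B₀ ⊗[k] Atil),
      c • u = ((1:B₀) ⊗ₜ[k] (algebraMap k Atil c)) * u := by
    intro c u
    induction u using TensorProduct.induction_on with
    | zero => simp
    | tmul x a => rw [Algebra.TensorProduct.tmul_mul_tmul, one_mul, ← Algebra.smul_def,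
        TensorProduct.tmul_smul]
    | add u v hu hv => rw [smul_add, mul_add, hu, hv]
  set M : Submodule k (B₀ ⊗[k] Atil) :=
    Submodule.span k {w : B₀ ⊗[k] Atil | ∃ (z : B₀) (a : Atil), a ∈ mtil ∧ w = z ⊗ₜ[k] a}
    with hM
  have httM : ∀ w ∈ M, ((1:B₀) ⊗ₜ[k] t) * w = 0 := by
    intro w hw
    induction hw using Submodule.span_induction with
    | mem w hw =>
      obtain ⟨z, a, ha, rfl⟩ := hw
      rw [Algebra.TensorProduct.tmul_mul_tmul, one_mul, htann a ha, TensorProduct.tmul_zero]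
    | zero => rw [mul_zero]
    | add u v hu hv hu' hv' => rw [mul_add, hu', hv', add_zero]
    | smul c u hu hu' => rw [mul_smul_comm, hu', smul_zero]
  set q : B₀ ⊗[k] Atil →ₗ[k] B₀ :=
    (TensorProduct.rid k B₀).toLinearMap ∘ₗ
      TensorProduct.map (LinearMap.id) (eps mtil hres) with hqdef
  have hq_tmul : ∀ (x : B₀) (a : Atil), q (x ⊗ₜ[k] a) = eps mtil hres a • x := by
    intro x a
    simp [hqdef, TensorProduct.map_tmul]
  have hqM : ∀ w ∈ M, q w = 0 := by
    intro w hw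
    induction hw using Submodule.span_induction with
    | mem w hw =>
      obtain ⟨z, a, ha, rfl⟩ := hw
      rw [hq_tmul, eps_mem mtil hres ha, zero_smul]
    | zero => rw [map_zero]
    | add u v hu hv hu' hv' => rw [map_add, hu', hv', add_zero]
    | smul c u hu hu' => rw [map_smul, hu', smul_zero]
  have hinjM : ∀ x : B₀, x ⊗ₜ[k] (1:Atil) ∈ M → x = 0 := by
    intro x hx
    have h := hqM _ hx
    rwa [hq_tmul, eps_one, one_smul] at h
  have htt_mul : ∀ u : B₀ ⊗[k] Atil, ((1:B₀) ⊗ₜ[k] t) * u = q u ⊗ₜ[k] t := by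
    intro u
    induction u using TensorProduct.induction_on with
    | zero => rw [mul_zero, map_zero, TensorProduct.zero_tmul]
    | tmul x a =>
      rw [Algebra.TensorProduct.tmul_mul_tmul, one_mul, hq_tmul,
        t_mul_eq mtil hres htann a, TensorProduct.tmul_smul, TensorProduct.smul_tmul']
    | add u v hu hv => rw [mul_add, map_add, TensorProduct.add_tmul, hu, hv]
  have hinjt : ∀ x y : B₀, x ⊗ₜ[k] t = y ⊗ₜ[k] t → x = y := by
    have hker : LinearMap.ker (LinearMap.toSpanSingleton k Atil t) = ⊥ :=
      LinearMap.ker_toSpanSingleton (R := k) (M := Atil) ht0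
    obtain ⟨g, hg⟩ := LinearMap.exists_leftInverse_of_injective _ hker
    have hgt : g t = 1 := by
      have h := congrArg (fun f => f (1:k)) hg
      simpa [LinearMap.toSpanSingleton_apply] using h
    intro x y hxy
    have h2 := congrArg ((TensorProduct.rid k B₀).toLinearMap ∘ₗ
      TensorProduct.map (LinearMap.id) g) hxy
    simpa [TensorProduct.map_tmul, hgt] using h2
  have hLP : ∀ x y : B₀, ∃ m ∈ M, P (x ⊗ₜ[k] 1) (y ⊗ₜ[k] 1) = P0 x y ⊗ₜ[k] 1 + m :=
    fun x y => ⟨_, hP0 x y, by ring⟩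
  have hPl0 : ∀ w : B₀ ⊗[k] Atil, P 0 w = 0 := by
    intro w
    have h := haddl 0 0 w
    rw [add_zero] at h
    exact (add_left_cancel (a := P 0 w) (by rw [add_zero]; exact h)).symm
  have hPr0 : ∀ w : B₀ ⊗[k] Atil, P w 0 = 0 := by
    intro w
    have h := haddr w 0 0
    rw [add_zero] at h
    exact (add_left_cancel (a := P w 0) (by rw [add_zero]; exact h)).symm
  have hP0addl : ∀ x x' y : B₀, P0 (x + x') y = P0 x y + P0 x' y := by
    intro x x' y
    obtain ⟨m, hm, e⟩ := hLP (x + x') y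
    obtain ⟨m1, hm1, e1⟩ := hLP x y
    obtain ⟨m2, hm2, e2⟩ := hLP x' y
    have h := haddl (x ⊗ₜ[k] 1) (x' ⊗ₜ[k] 1) (y ⊗ₜ[k] 1)
    rw [← TensorProduct.add_tmul, e, e1, e2] at h
    have hmem : (P0 (x + x') y - (P0 x y + P0 x' y)) ⊗ₜ[k] (1:Atil) ∈ M := by
      have e3 : (P0 (x + x') y - (P0 x y + P0 x' y)) ⊗ₜ[k] (1:Atil) = m1 + m2 - m := by
        rw [TensorProduct.sub_tmul, TensorProduct.add_tmul]
        linear_combination h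
      rw [e3]
      exact sub_mem (add_mem hm1 hm2) hm
    exact sub_eq_zero.mp (hinjM _ hmem)
  have hP0addr : ∀ x y y' : B₀, P0 x (y + y') = P0 x y + P0 x y' := by
    intro x y y'
    obtain ⟨m, hm, e⟩ := hLP x (y + y')
    obtain ⟨m1, hm1, e1⟩ := hLP x y
    obtain ⟨m2, hm2, e2⟩ := hLP x y'
    have h := haddr (x ⊗ₜ[k] 1) (y ⊗ₜ[k] 1) (y' ⊗ₜ[k] 1)
    rw [← TensorProduct.add_tmul, e, e1, e2] at h
    have hmem : (P0 x (y + y') - (P0 x y + P0 x y')) ⊗ₜ[k] (1:Atil) ∈ M := by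
      have e3 : (P0 x (y + y') - (P0 x y + P0 x y')) ⊗ₜ[k] (1:Atil) = m1 + m2 - m := by
        rw [TensorProduct.sub_tmul, TensorProduct.add_tmul]
        linear_combination h
      rw [e3]
      exact sub_mem (add_mem hm1 hm2) hm
    exact sub_eq_zero.mp (hinjM _ hmem)
  have hP0zl : ∀ y : B₀, P0 0 y = 0 := by
    intro y
    obtain ⟨m, hm, e⟩ := hLP 0 y
    rw [TensorProduct.zero_tmul, hPl0] at e
    have hmem : (P0 0 y) ⊗ₜ[k] (1:Atil) ∈ M := by
      have e3 : (P0 0 y) ⊗ₜ[k] (1:Atil) = -m := by linear_combination -e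
      rw [e3]
      exact neg_mem hm
    exact hinjM _ hmem
  have hP0zr : ∀ x : B₀, P0 x 0 = 0 := by
    intro x
    obtain ⟨m, hm, e⟩ := hLP x 0
    rw [TensorProduct.zero_tmul, hPr0] at e
    have hmem : (P0 x 0) ⊗ₜ[k] (1:Atil) ∈ M := by
      have e3 : (P0 x 0) ⊗ₜ[k] (1:Atil) = -m := by linear_combination -e
      rw [e3]
      exact neg_mem hm
    exact hinjM _ hmem
  have hP0negl : ∀ x y : B₀, P0 (-x) y = -P0 x y := by
    intro x y
    have h := hP0addl x (-x) y
    rw [add_neg_cancel, hP0zl] at h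
    linear_combination -h
  have hP0negr : ∀ x y : B₀, P0 x (-y) = -P0 x y := by
    intro x y
    have h := hP0addr x y (-y)
    rw [add_neg_cancel, hP0zr] at h
    linear_combination -h
  refine ⟨?_, ?_, ?_, ?_, ?_, ?_, ?_, ?_, ?_⟩
  · exact ⟨fun a => rfl, fun u v => rfl,
      fun u => ⟨0, by rw [RingEquiv.refl_apply, sub_self, TensorProduct.zero_tmul]⟩⟩
  · rintro θ₁ θ₂ ⟨h11, h12, h13⟩ ⟨h21, h22, h23⟩
    refine ⟨fun a => ?_, fun u v => ?_, fun u => ?_⟩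
    · rw [RingEquiv.trans_apply, h11, h21]
    · rw [RingEquiv.trans_apply, h12, h22, RingEquiv.trans_apply, RingEquiv.trans_apply]
    · obtain ⟨x1, hx1⟩ := h13 u
      obtain ⟨x2, hx2⟩ := h23 (θ₁ u)
      exact ⟨x2 + x1, by
        rw [RingEquiv.trans_apply, TensorProduct.add_tmul, ← hx1, ← hx2]; ring⟩
  · rintro θ ⟨h1, h2, h3⟩
    refine ⟨fun a => θ.injective ?_, fun u v => θ.injective ?_, fun u => ?_⟩
    · rw [RingEquiv.apply_symm_apply, h1]
    · rw [RingEquiv.apply_symm_apply, h2, RingEquiv.apply_symm_apply,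
        RingEquiv.apply_symm_apply]
    · obtain ⟨x, hx⟩ := h3 (θ.symm u)
      refine ⟨-x, ?_⟩
      rw [TensorProduct.neg_tmul, ← hx, RingEquiv.apply_symm_apply]
      ring
  · exact ⟨fun x y => by simp, fun x y => by simp [hP0zl, hP0zr]⟩
  · rintro P' Q' ⟨h1p, h2p⟩ ⟨h1q, h2q⟩
    constructor
    · intro x y
      simp only [LinearMap.add_apply, h1p x y, h1q x y]
      ring
    · intro x y
      simp only [LinearMap.add_apply, h2p x y, h2q x y, hP0addl, hP0addr]
      ring
  · rintro P' ⟨h1p, h2p⟩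
    constructor
    · intro x y
      simp only [LinearMap.neg_apply, h1p x y]
      ring
    · intro x y
      simp only [LinearMap.neg_apply, h2p x y, hP0negl, hP0negr]
      ring
  · intro P' Q' _ _ u
    have hTT : ∀ (R S : B₀ →ₗ[k] B₀) (w : B₀ ⊗[k] Atil),
        TensorProduct.map R (LinearMap.mulLeft k t)
          (TensorProduct.map S (LinearMap.mulLeft k t) w) = 0 := by
      intro R S w
      induction w using TensorProduct.induction_on with
      | zero => rw [map_zero, map_zero]
      | tmul x a =>
        simp only [TensorProduct.map_tmul, LinearMap.mulLeft_apply]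
        rw [htann _ (Ideal.mul_mem_right a mtil htmem), TensorProduct.tmul_zero]
      | add u v hu hv => rw [map_add, map_add, hu, hv, add_zero]
    simp only [thetaFun, TensorProduct.map_add_left, LinearMap.add_apply, map_add,
      hTT P' Q' u]
    abel
  · intro P' hP'
    have hP'one : P' 1 = 0 := by
      have h := hP'.1 1 1
      simp only [one_mul, mul_one] at h
      exact (add_left_cancel (a := P' 1) (by rw [add_zero]; exact h)).symm
    set U : B₀ ⊗[k] Atil →ₗ[k] B₀ ⊗[k] Atil :=
      TensorProduct.map P' (LinearMap.id) with hUdef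
    have hUtmul : ∀ (x : B₀) (a : Atil), U (x ⊗ₜ[k] a) = P' x ⊗ₜ[k] a := by
      intro x a
      simp [hUdef]
    have hTU : ∀ u : B₀ ⊗[k] Atil,
        TensorProduct.map P' (LinearMap.mulLeft k t) u = ((1:B₀) ⊗ₜ[k] t) * U u := by
      intro u
      induction u using TensorProduct.induction_on with
      | zero => rw [map_zero, map_zero, mul_zero]
      | tmul x a =>
        rw [TensorProduct.map_tmul, hUtmul, Algebra.TensorProduct.tmul_mul_tmul, one_mul,
          LinearMap.mulLeft_apply]
      | add u v hu hv => rw [map_add, map_add, hu, hv, mul_add]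
    have hUcomm : ∀ (c : Atil) (u : B₀ ⊗[k] Atil),
        U (((1:B₀) ⊗ₜ[k] c) * u) = ((1:B₀) ⊗ₜ[k] c) * U u := by
      intro c u
      induction u using TensorProduct.induction_on with
      | zero => rw [mul_zero, map_zero, mul_zero]
      | tmul x a => rw [Algebra.TensorProduct.tmul_mul_tmul, one_mul, hUtmul, hUtmul,
          Algebra.TensorProduct.tmul_mul_tmul, one_mul]
      | add u v hu hv => rw [mul_add, map_add, hu, hv, map_add, mul_add]
    have hUder : ∀ u v : B₀ ⊗[k] Atil, U (u * v) = u * U v + v * U u := by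
      intro u v
      induction u using TensorProduct.induction_on generalizing v with
      | zero => simp
      | tmul x a =>
        induction v using TensorProduct.induction_on with
        | zero => simp
        | tmul y b =>
          rw [Algebra.TensorProduct.tmul_mul_tmul, hUtmul, hUtmul, hUtmul, hP'.1,
            TensorProduct.add_tmul, Algebra.TensorProduct.tmul_mul_tmul,
            Algebra.TensorProduct.tmul_mul_tmul, mul_comm b a]
        | add v1 v2 g1 g2 =>
          rw [mul_add, map_add, g1, g2, map_add]
          ring
      | add u1 u2 h1 h2 =>
        rw [add_mul, map_add, h1, h2, map_add]
        ring
    have hUM : ∀ m ∈ M, U m ∈ M := by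
      intro m hm
      induction hm using Submodule.span_induction with
      | mem w hw =>
        obtain ⟨z, a, ha, rfl⟩ := hw
        rw [hUtmul]
        exact Submodule.subset_span ⟨P' z, a, ha, rfl⟩
      | zero => rw [map_zero]; exact Submodule.zero_mem M
      | add u v hu hv hu' hv' => rw [map_add]; exact add_mem hu' hv'
      | smul c u hu hu' => rw [map_smul]; exact Submodule.smul_mem M c hu'
    have hDt : ∀ u v : B₀ ⊗[k] Atil, ((1:B₀) ⊗ₜ[k] t) * U (P u v)
        = ((1:B₀) ⊗ₜ[k] t) * P (U u) v + ((1:B₀) ⊗ₜ[k] t) * P u (U v) := by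
      intro u v
      induction u using TensorProduct.induction_on generalizing v with
      | zero => simp only [hPl0, map_zero, mul_zero, add_zero]
      | add u1 u2 h1 h2 =>
        simp only [haddl, map_add, mul_add]
        rw [h1 v, h2 v]
        ring
      | tmul x a =>
        induction v using TensorProduct.induction_on with
        | zero => simp only [hPr0, map_zero, mul_zero, add_zero]
        | add v1 v2 g1 g2 =>
          simp only [haddr, map_add, mul_add]
          rw [g1, g2]
          ring
        | tmul y b =>
          obtain ⟨m, hm, em⟩ := hLP x y
          obtain ⟨m1, hm1, em1⟩ := hLP (P' x) y
          obtain ⟨m2, hm2, em2⟩ := hLP x (P' y)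
          have exa : x ⊗ₜ[k] a = ((1:B₀) ⊗ₜ[k] a) * (x ⊗ₜ[k] (1:Atil)) := by
            rw [Algebra.TensorProduct.tmul_mul_tmul, one_mul, mul_one]
          have eyb : y ⊗ₜ[k] b = ((1:B₀) ⊗ₜ[k] b) * (y ⊗ₜ[k] (1:Atil)) := by
            rw [Algebra.TensorProduct.tmul_mul_tmul, one_mul, mul_one]
          have exPa : P' x ⊗ₜ[k] a = ((1:B₀) ⊗ₜ[k] a) * (P' x ⊗ₜ[k] (1:Atil)) := by
            rw [Algebra.TensorProduct.tmul_mul_tmul, one_mul, mul_one]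
          have eyPb : P' y ⊗ₜ[k] b = ((1:B₀) ⊗ₜ[k] b) * (P' y ⊗ₜ[k] (1:Atil)) := by
            rw [Algebra.TensorProduct.tmul_mul_tmul, one_mul, mul_one]
          have E1 : U (P (x ⊗ₜ[k] a) (y ⊗ₜ[k] b))
              = ((1:B₀) ⊗ₜ[k] a) * (((1:B₀) ⊗ₜ[k] b)
                  * (P' (P0 x y) ⊗ₜ[k] (1:Atil) + U m)) := by
            rw [exa, eyb, hlinl, hlinr, hUcomm, hUcomm, em, map_add, hUtmul]
          have E2 : P (U (x ⊗ₜ[k] a)) (y ⊗ₜ[k] b)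
              = ((1:B₀) ⊗ₜ[k] a) * (((1:B₀) ⊗ₜ[k] b)
                  * (P0 (P' x) y ⊗ₜ[k] (1:Atil) + m1)) := by
            rw [hUtmul, exPa, eyb, hlinl, hlinr, em1]
          have E3 : P (x ⊗ₜ[k] a) (U (y ⊗ₜ[k] b))
              = ((1:B₀) ⊗ₜ[k] a) * (((1:B₀) ⊗ₜ[k] b)
                  * (P0 x (P' y) ⊗ₜ[k] (1:Atil) + m2)) := by
            rw [hUtmul, exa, eyPb, hlinl, hlinr, em2]
          have hb : P' (P0 x y) ⊗ₜ[k] (1:Atil)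
              = P0 (P' x) y ⊗ₜ[k] (1:Atil) + P0 x (P' y) ⊗ₜ[k] (1:Atil) := by
            rw [hP'.2 x y, TensorProduct.add_tmul]
          have hk : ∀ w ∈ M, ((1:B₀) ⊗ₜ[k] t)
              * (((1:B₀) ⊗ₜ[k] a) * (((1:B₀) ⊗ₜ[k] b) * w)) = 0 := by
            intro w hw
            have h0 := httM w hw
            calc ((1:B₀) ⊗ₜ[k] t) * (((1:B₀) ⊗ₜ[k] a) * (((1:B₀) ⊗ₜ[k] b) * w))
                = ((1:B₀) ⊗ₜ[k] a) * (((1:B₀) ⊗ₜ[k] b)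
                    * (((1:B₀) ⊗ₜ[k] t) * w)) := by ring
              _ = 0 := by rw [h0, mul_zero, mul_zero]
          rw [E1, E2, E3]
          linear_combination hk (U m) (hUM m hm) - hk m1 hm1 - hk m2 hm2 +
            (((1:B₀) ⊗ₜ[k] t) * (((1:B₀) ⊗ₜ[k] a) * ((1:B₀) ⊗ₜ[k] b))) * hb
    have hTneg : ∀ u : B₀ ⊗[k] Atil, TensorProduct.map (-P') (LinearMap.mulLeft k t) u
        = - TensorProduct.map P' (LinearMap.mulLeft k t) u := by
      intro u
      induction u using TensorProduct.induction_on with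
      | zero => rw [map_zero, map_zero, neg_zero]
      | tmul x a => rw [TensorProduct.map_tmul, TensorProduct.map_tmul,
          LinearMap.neg_apply, TensorProduct.neg_tmul]
      | add u v hu hv => rw [map_add, map_add, hu, hv, neg_add]
    have hTT0 : ∀ u : B₀ ⊗[k] Atil, TensorProduct.map P' (LinearMap.mulLeft k t)
        (TensorProduct.map P' (LinearMap.mulLeft k t) u) = 0 := by
      intro u
      induction u using TensorProduct.induction_on with
      | zero => rw [map_zero, map_zero]
      | tmul x a =>
        simp only [TensorProduct.map_tmul, LinearMap.mulLeft_apply]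
        rw [htann _ (Ideal.mul_mem_right a mtil htmem), TensorProduct.tmul_zero]
      | add u v hu hv => rw [map_add, map_add, hu, hv, add_zero]
    have hmul : ∀ u v : B₀ ⊗[k] Atil,
        thetaFun t P' (u * v) = thetaFun t P' u * thetaFun t P' v := by
      intro u v
      simp only [thetaFun]
      rw [hTU, hTU, hTU, hUder]
      linear_combination (-(U u * U v)) * httz
    refine ⟨RingEquiv.mk ⟨thetaFun t P', thetaFun t (-P'), ?_, ?_⟩ hmul ?_,
        fun u => rfl, fun a => ?_, fun u v => ?_, fun u => ?_⟩
    · intro u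
      simp only [thetaFun, hTneg]
      rw [map_add, hTT0, add_zero]
      abel
    · intro u
      simp only [thetaFun, hTneg]
      rw [map_add, map_neg, hTT0, neg_zero, add_zero]
      abel
    · intro u v
      simp only [thetaFun, map_add]
      abel
    · show thetaFun t P' ((1:B₀) ⊗ₜ[k] a) = (1:B₀) ⊗ₜ[k] a
      simp only [thetaFun, TensorProduct.map_tmul]
      rw [hP'one, TensorProduct.zero_tmul, add_zero]
    · show thetaFun t P' (P u v) = P (thetaFun t P' u) (thetaFun t P' v)
      simp only [thetaFun]
      have e4 : P (((1:B₀) ⊗ₜ[k] t) * U u) (((1:B₀) ⊗ₜ[k] t) * U v) = 0 := by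
        rw [hlinl, hlinr, ← mul_assoc, httz, zero_mul]
      rw [hTU, hTU, hTU, hDt u v, haddl, haddr, haddr, e4, hlinr, hlinl, add_zero]
      ring
    · refine ⟨q (U u), ?_⟩
      show thetaFun t P' u - u = q (U u) ⊗ₜ[k] t
      simp only [thetaFun]
      rw [hTU, htt_mul]
      ring
  · intro θ hS
    obtain ⟨hS1, hS2, hS3⟩ := hS
    choose s hs using hS3
    have hθeq : ∀ u : B₀ ⊗[k] Atil, θ u = u + s u ⊗ₜ[k] t := by
      intro u
      have h := hs u
      linear_combination h
    have hθx : ∀ x : B₀,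
        θ (x ⊗ₜ[k] (1:Atil)) = x ⊗ₜ[k] (1:Atil) + s (x ⊗ₜ[k] (1:Atil)) ⊗ₜ[k] t :=
      fun x => hθeq _
    have hθsmul : ∀ (c : k) (u : B₀ ⊗[k] Atil), θ (c • u) = c • θ u := by
      intro c u
      rw [hsmul, map_mul, hS1, ← hsmul]
    have hθM : ∀ m ∈ M, θ m = m := by
      intro m hm
      induction hm using Submodule.span_induction with
      | mem w hw =>
        obtain ⟨z, a, ha, rfl⟩ := hw
        have e : z ⊗ₜ[k] a = ((1:B₀) ⊗ₜ[k] a) * (z ⊗ₜ[k] (1:Atil)) := by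
          rw [Algebra.TensorProduct.tmul_mul_tmul, one_mul, mul_one]
        rw [e, map_mul, hS1, hθx, mul_add, ← e]
        have e2 : ((1:B₀) ⊗ₜ[k] a) * (s (z ⊗ₜ[k] (1:Atil)) ⊗ₜ[k] t) = 0 := by
          rw [Algebra.TensorProduct.tmul_mul_tmul, one_mul, mul_comm a t, htann a ha,
            TensorProduct.tmul_zero]
        rw [e2, add_zero]
      | zero => rw [map_zero]
      | add u v hu hv hu' hv' => rw [map_add, hu', hv']
      | smul c u hu hu' => rw [hθsmul, hu']
    have hσadd : ∀ x y : B₀, s ((x + y) ⊗ₜ[k] (1:Atil))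
        = s (x ⊗ₜ[k] (1:Atil)) + s (y ⊗ₜ[k] (1:Atil)) := by
      intro x y
      apply hinjt
      have h1 := hθx (x + y)
      have h2 := hθx x
      have h3 := hθx y
      have h4 : θ ((x + y) ⊗ₜ[k] (1:Atil)) = θ (x ⊗ₜ[k] (1:Atil)) + θ (y ⊗ₜ[k] (1:Atil)) := by
        rw [← map_add, ← TensorProduct.add_tmul]
      have h5 : (x + y) ⊗ₜ[k] (1:Atil) = x ⊗ₜ[k] (1:Atil) + y ⊗ₜ[k] (1:Atil) :=
        TensorProduct.add_tmul x y 1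
      have h6 : (s (x ⊗ₜ[k] (1:Atil)) + s (y ⊗ₜ[k] (1:Atil))) ⊗ₜ[k] t
          = s (x ⊗ₜ[k] (1:Atil)) ⊗ₜ[k] t + s (y ⊗ₜ[k] (1:Atil)) ⊗ₜ[k] t :=
        TensorProduct.add_tmul _ _ t
      linear_combination -h1 + h2 + h3 + h4 - h5 - h6
    have hσsmul : ∀ (c : k) (x : B₀), s ((c • x) ⊗ₜ[k] (1:Atil))
        = c • s (x ⊗ₜ[k] (1:Atil)) := by
      intro c x
      apply hinjt
      have h1 := hθx (c • x)
      have h4 : θ ((c • x) ⊗ₜ[k] (1:Atil)) = c • θ (x ⊗ₜ[k] (1:Atil)) := by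
        rw [← TensorProduct.smul_tmul', hθsmul]
      have h2' : c • θ (x ⊗ₜ[k] (1:Atil))
          = c • (x ⊗ₜ[k] (1:Atil) + s (x ⊗ₜ[k] (1:Atil)) ⊗ₜ[k] t) :=
        congrArg (fun w => c • w) (hθx x)
      have h7 : c • (x ⊗ₜ[k] (1:Atil) + s (x ⊗ₜ[k] (1:Atil)) ⊗ₜ[k] t)
          = c • (x ⊗ₜ[k] (1:Atil)) + c • (s (x ⊗ₜ[k] (1:Atil)) ⊗ₜ[k] t) :=
        smul_add c _ _
      have h5 : (c • x) ⊗ₜ[k] (1:Atil) = c • (x ⊗ₜ[k] (1:Atil)) :=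
        (TensorProduct.smul_tmul' c x 1).symm
      have h6 : (c • s (x ⊗ₜ[k] (1:Atil))) ⊗ₜ[k] t = c • (s (x ⊗ₜ[k] (1:Atil)) ⊗ₜ[k] t) :=
        (TensorProduct.smul_tmul' c _ t).symm
      linear_combination -h1 + h4 + h2' + h7 - h5 - h6
    refine ⟨LinearMap.mk ⟨fun x => s (x ⊗ₜ[k] (1:Atil)), hσadd⟩
        (fun c x => by simpa using hσsmul c x), ⟨⟨?_, ?_⟩, ?_⟩, ?_⟩
    · intro x y
      apply hinjt
      have h1 : θ ((x * y) ⊗ₜ[k] (1:Atil)) = θ (x ⊗ₜ[k] (1:Atil)) * θ (y ⊗ₜ[k] (1:Atil)) := by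
        rw [← map_mul, Algebra.TensorProduct.tmul_mul_tmul, one_mul]
      rw [hθx, hθx, hθx] at h1
      have e1 : (x ⊗ₜ[k] (1:Atil)) * (s (y ⊗ₜ[k] (1:Atil)) ⊗ₜ[k] t)
          = (x * s (y ⊗ₜ[k] (1:Atil))) ⊗ₜ[k] t := by
        rw [Algebra.TensorProduct.tmul_mul_tmul, one_mul]
      have e2 : (s (x ⊗ₜ[k] (1:Atil)) ⊗ₜ[k] t) * (y ⊗ₜ[k] (1:Atil))
          = (y * s (x ⊗ₜ[k] (1:Atil))) ⊗ₜ[k] t := by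
        rw [Algebra.TensorProduct.tmul_mul_tmul, mul_one,
          mul_comm (s (x ⊗ₜ[k] (1:Atil))) y]
      have e3 : (s (x ⊗ₜ[k] (1:Atil)) ⊗ₜ[k] t) * (s (y ⊗ₜ[k] (1:Atil)) ⊗ₜ[k] t) = 0 := by
        rw [Algebra.TensorProduct.tmul_mul_tmul, htann t htmem, TensorProduct.tmul_zero]
      have e4 : (x ⊗ₜ[k] (1:Atil)) * (y ⊗ₜ[k] (1:Atil)) = (x * y) ⊗ₜ[k] (1:Atil) := by
        rw [Algebra.TensorProduct.tmul_mul_tmul, one_mul]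
      rw [TensorProduct.add_tmul]
      linear_combination h1 + e1 + e2 + e3 + e4
    · intro x y
      obtain ⟨m, hm, em⟩ := hLP x y
      obtain ⟨m1, hm1, em1⟩ := hLP (s (x ⊗ₜ[k] (1:Atil))) y
      obtain ⟨m2, hm2, em2⟩ := hLP x (s (y ⊗ₜ[k] (1:Atil)))
      apply hinjt
      have h1 := hS2 (x ⊗ₜ[k] (1:Atil)) (y ⊗ₜ[k] (1:Atil))
      rw [hθx, hθx, haddl, haddr, haddr] at h1
      have ex : s (x ⊗ₜ[k] (1:Atil)) ⊗ₜ[k] t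
          = ((1:B₀) ⊗ₜ[k] t) * (s (x ⊗ₜ[k] (1:Atil)) ⊗ₜ[k] (1:Atil)) := by
        rw [Algebra.TensorProduct.tmul_mul_tmul, one_mul, mul_one]
      have ey : s (y ⊗ₜ[k] (1:Atil)) ⊗ₜ[k] t
          = ((1:B₀) ⊗ₜ[k] t) * (s (y ⊗ₜ[k] (1:Atil)) ⊗ₜ[k] (1:Atil)) := by
        rw [Algebra.TensorProduct.tmul_mul_tmul, one_mul, mul_one]
      have f2 : P (x ⊗ₜ[k] (1:Atil)) (s (y ⊗ₜ[k] (1:Atil)) ⊗ₜ[k] t)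
          = P0 x (s (y ⊗ₜ[k] (1:Atil))) ⊗ₜ[k] t := by
        rw [ey, hlinr, em2, mul_add, httM m2 hm2, add_zero,
          Algebra.TensorProduct.tmul_mul_tmul, one_mul, mul_one]
      have f3 : P (s (x ⊗ₜ[k] (1:Atil)) ⊗ₜ[k] t) (y ⊗ₜ[k] (1:Atil))
          = P0 (s (x ⊗ₜ[k] (1:Atil))) y ⊗ₜ[k] t := by
        rw [ex, hlinl, em1, mul_add, httM m1 hm1, add_zero,
          Algebra.TensorProduct.tmul_mul_tmul, one_mul, mul_one]
      have f4 : P (s (x ⊗ₜ[k] (1:Atil)) ⊗ₜ[k] t) (s (y ⊗ₜ[k] (1:Atil)) ⊗ₜ[k] t) = 0 := by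
        rw [ex, ey, hlinl, hlinr, ← mul_assoc, httz, zero_mul]
      rw [f2, f3, f4, add_zero, em, map_add, hθM m hm, hθx] at h1
      rw [TensorProduct.add_tmul]
      linear_combination h1
    · intro x
      exact hθx x
    · intro Q hQ
      apply LinearMap.ext
      intro x
      apply hinjt
      have h1 := (hQ.2 x).symm.trans (hθx x)
      show Q x ⊗ₜ[k] t = s (x ⊗ₜ[k] (1:Atil)) ⊗ₜ[k] t
      linear_combination h1
end

section
/- Let k be a field, (B, {-,-}) a Poisson k-algebra, and I ⊆ B a Poisson ideal, so that B/I is a Poisson k-algebra and B/I carries the Poisson B-module operation {b, y + I} := {b,y} + I. Let B' := B × B with multiplication (a,b)·(c,d) = (ac, ad + bc) and bracket {(a,b),(c,d)} := ({a,c}, {a,d} + {b,c}) (so B' = B[ε] with ε = (0,1), ε² = 0), and let π : B' → B be (a,b) ↦ a. Then the assignment φ ↦ I'_φ := {(x,y) ∈ B' : x ∈ I and y + I = φ(x)} is a bijection from the set of B-module homomorphisms φ : I → B/I satisfying φ({b,x}) = {b, φ(x)} for all b ∈ B and x ∈ I, onto the set of ideals I' of B' such that {u, v} ∈ I' for all u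 ∈ B' and v ∈ I', π(I') = I, and {y ∈ B : (0,y) ∈ I'} = I (this last condition being equivalent to flatness of B'/I' over k[ε]). Under this bijection, φ = 0 corresponds to I' = I × I. -/
/-- The condition that `φ : I → B/I` is a homomorphism of Poisson `B`-modules, where `Pq` is
the induced Poisson module operation of `B` on `B/I`. -/
def PoissonModHom {B : Type*} [CommRing B]
    (P : B → B → B) (I : Ideal B) (hI : ∀ b : B, ∀ x ∈ I, P b x ∈ I)
    (Pq : B → B ⧸ I → B ⧸ I) (φ : I → B ⧸ I) : Prop :=
  (∀ x y : I, φ (x + y) = φ x + φ y) ∧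
  (∀ (b : B) (x : I), φ (b • x) = b • φ x) ∧
  (∀ (b : B) (x : I), φ ⟨P b (x : B), hI b (x : B) x.2⟩ = Pq b (φ x))

/-- The condition that a subset `I'` of `B' = B[ε]` (realized as `B × B` with multiplication
`(a,b)(c,d) = (ac, ad + bc)` and bracket `{(a,b),(c,d)} = ({a,c}, {a,d} + {b,c})`) is a
Poisson ideal of `B'` lifting `I` flatly: it is an ideal, is closed under bracketing with
arbitrary elements, projects onto `I`, and `{y | (0,y) ∈ I'} = I` (flatness over `k[ε]`). -/
def DeformIdeal {B : Type*} [CommRing B]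
    (P : B → B → B) (I : Ideal B) (I' : Set (B × B)) : Prop :=
  (0 : B × B) ∈ I' ∧
  (∀ u ∈ I', ∀ v ∈ I', u + v ∈ I') ∧
  (∀ u : B × B, ∀ v ∈ I', ((u.1 * v.1, u.1 * v.2 + u.2 * v.1) : B × B) ∈ I') ∧
  (∀ u : B × B, ∀ v ∈ I', ((P u.1 v.1, P u.1 v.2 + P u.2 v.1) : B × B) ∈ I') ∧
  Prod.fst '' I' = (I : Set B) ∧
  {y : B | ((0 : B), y) ∈ I'} = (I : Set B)

/-- The subset `I'_φ = {(x,y) : x ∈ I, y + I = φ(x)}` of `B × B` associated to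
`φ : I → B/I`. -/
def idealOfHom {B : Type*} [CommRing B] (I : Ideal B) (φ : I → B ⧸ I) : Set (B × B) :=
  {p : B × B | ∃ h : p.1 ∈ I, Ideal.Quotient.mk I p.2 = φ ⟨p.1, h⟩}

/-- First-order Poisson deformations of the Poisson subscheme defined by a Poisson ideal `I`
of a Poisson `k`-algebra `B`: the assignment `φ ↦ I'_φ` is a bijection from Poisson
`B`-module homomorphisms `I → B/I` onto Poisson ideals of `B[ε]` lifting `I` flatly, with
`φ = 0` corresponding to the trivial deformation `I × I`. -/
theorem stmt2 (k B : Type*) [Field k] [CommRing B] [Algebra k B]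
    (P : B → B → B)
    -- `(B, P)` is a Poisson `k`-algebra
    (hPaddl : ∀ a b c : B, P (a + b) c = P a c + P b c)
    (hPaddr : ∀ a b c : B, P a (b + c) = P a b + P a c)
    (hPsmull : ∀ (r : k) (a b : B), P (r • a) b = r • P a b)
    (hPsmulr : ∀ (r : k) (a b : B), P a (r • b) = r • P a b)
    (hPanti : ∀ a b : B, P a b = -P b a)
    (hPjac : ∀ a b c : B, P a (P b c) = P (P a b) c + P b (P a c))
    (hPleib : ∀ a b c : B, P a (b * c) = b * P a c + c * P a b)
    -- the Poisson ideal `I` and the induced Poisson module operation on `B ⧸ I`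
    (I : Ideal B) (hI : ∀ b : B, ∀ x ∈ I, P b x ∈ I)
    (Pq : B → B ⧸ I → B ⧸ I)
    (hPq : ∀ b y : B, Pq b (Ideal.Quotient.mk I y) = Ideal.Quotient.mk I (P b y)) :
    (∀ φ : I → B ⧸ I, PoissonModHom P I hI Pq φ → DeformIdeal P I (idealOfHom I φ)) ∧
    (∀ I' : Set (B × B), DeformIdeal P I I' →
      ∃! φ : I → B ⧸ I, PoissonModHom P I hI Pq φ ∧ I' = idealOfHom I φ) ∧
    (idealOfHom I (fun _ => (0 : B ⧸ I)) = {p : B × B | p.1 ∈ I ∧ p.2 ∈ I}) := by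

  classical
  -- basic facts
  have hP0l : ∀ x : B, P 0 x = 0 := by
    intro x
    have h := hPaddl 0 0 x
    simpa using h.symm
  have hmk_smul : ∀ b y : B, Ideal.Quotient.mk I (b * y) = b • Ideal.Quotient.mk I y :=
    fun _ _ => rfl
  refine ⟨?_, ?_, ?_⟩
  · -- forward direction
    rintro φ ⟨hφadd, hφsmul, hφP⟩
    have hφ0 : φ 0 = 0 := by
      have := hφadd 0 0
      simpa using this.symm
    refine ⟨⟨I.zero_mem, by simpa [show (⟨(0 : B), I.zero_mem⟩ : I) = 0 from Subtype.ext rfl] using hφ0.symm⟩, ?_, ?_, ?_, ?_, ?_⟩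
    · rintro u ⟨hu1, hu2⟩ v ⟨hv1, hv2⟩
      refine ⟨I.add_mem hu1 hv1, ?_⟩
      have heq : (⟨(u + v).1, I.add_mem hu1 hv1⟩ : I) = ⟨u.1, hu1⟩ + ⟨v.1, hv1⟩ :=
        Subtype.ext rfl
      show Ideal.Quotient.mk I (u.2 + v.2) = _
      rw [map_add, hu2, hv2, heq, hφadd]
    · rintro u v ⟨hv1, hv2⟩
      refine ⟨I.mul_mem_left u.1 hv1, ?_⟩
      have h2 : Ideal.Quotient.mk I (u.2 * v.1) = 0 :=
        Ideal.Quotient.eq_zero_iff_mem.2 (I.mul_mem_left u.2 hv1)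
      have : (⟨u.1 * v.1, I.mul_mem_left u.1 hv1⟩ : I) = u.1 • ⟨v.1, hv1⟩ := rfl
      rw [map_add, h2, add_zero, hmk_smul, hv2, this, hφsmul]
    · rintro u v ⟨hv1, hv2⟩
      refine ⟨hI u.1 v.1 hv1, ?_⟩
      have h2 : Ideal.Quotient.mk I (P u.2 v.1) = 0 :=
        Ideal.Quotient.eq_zero_iff_mem.2 (hI u.2 v.1 hv1)
      rw [map_add, h2, add_zero, ← hPq, hv2, ← hφP u.1 ⟨v.1, hv1⟩]
    · ext x
      constructor
      · rintro ⟨p, ⟨hp1, _⟩, rfl⟩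
        exact hp1
      · intro hx
        obtain ⟨y, hy⟩ := Ideal.Quotient.mk_surjective (φ ⟨x, hx⟩)
        exact ⟨(x, y), ⟨hx, hy⟩, rfl⟩
    · ext y
      constructor
      · rintro ⟨h0', hy⟩
        have hz : φ ⟨(0 : B), h0'⟩ = 0 := by
          have : (⟨(0 : B), h0'⟩ : I) = 0 := Subtype.ext rfl
          rw [this, hφ0]
        rw [hz] at hy
        exact Ideal.Quotient.eq_zero_iff_mem.1 hy
      · intro hy
        refine ⟨I.zero_mem, ?_⟩
        rw [Ideal.Quotient.eq_zero_iff_mem.2 hy]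
        have : (⟨((0 : B), y).1, I.zero_mem⟩ : I) = 0 := Subtype.ext rfl
        rw [this, hφ0]
  · -- inverse direction
    rintro I' ⟨h0, hadd, hmul, hbr, hfst, hker⟩
    -- negation closure
    have hneg : ∀ v ∈ I', -v ∈ I' := by
      intro v hv
      have := hmul (-1, 0) v hv
      simpa [show -v = (-v.1, -v.2) from rfl] using this
    -- well-definedness
    have hwd : ∀ p ∈ I', ∀ q ∈ I', p.1 = q.1 →
        Ideal.Quotient.mk I p.2 = Ideal.Quotient.mk I q.2 := by
      intro p hp q hq hpq
      have h1 : p + -q ∈ I' := hadd p hp _ (hneg q hq)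
      have h2 : ((0 : B), p.2 - q.2) ∈ I' := by
        have : p + -q = ((0 : B), p.2 - q.2) := by
          ext <;> simp [hpq, sub_eq_add_neg]
        rwa [this] at h1
      have h3 : p.2 - q.2 ∈ I := by
        have h4 : p.2 - q.2 ∈ {y : B | ((0 : B), y) ∈ I'} := h2
        rw [hker] at h4
        exact h4
      exact Ideal.Quotient.eq.2 h3
    -- existence of lifts
    have hex : ∀ x : I, ∃ y : B, ((x : B), y) ∈ I' := by
      intro x
      have : (x : B) ∈ Prod.fst '' I' := hfst ▸ x.2
      obtain ⟨p, hp, hp1⟩ := this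
      exact ⟨p.2, by rwa [← hp1, Prod.mk.eta]⟩
    set c : I → B := fun x => Classical.choose (hex x) with hc
    have hcmem : ∀ x : I, ((x : B), c x) ∈ I' := fun x => Classical.choose_spec (hex x)
    set φ : I → B ⧸ I := fun x => Ideal.Quotient.mk I (c x) with hφdef
    have hwdφ : ∀ x : I, ∀ y : B, ((x : B), y) ∈ I' → Ideal.Quotient.mk I y = φ x := by
      intro x y hy
      exact hwd _ hy _ (hcmem x) rfl
    have hφadd : ∀ x y : I, φ (x + y) = φ x + φ y := by
      intro x y
      have := hadd _ (hcmem x) _ (hcmem y)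
      have h2 : (((x : B) + y, c x + c y) : B × B) ∈ I' := this
      rw [← hwdφ (x + y) (c x + c y) h2, map_add]
    have hφsmul : ∀ (b : B) (x : I), φ (b • x) = b • φ x := by
      intro b x
      have := hmul (b, 0) _ (hcmem x)
      simp only [zero_mul, add_zero] at this
      rw [← hwdφ (b • x) (b * c x) this, hmk_smul]
    have hφP : ∀ (b : B) (x : I),
        φ ⟨P b (x : B), hI b (x : B) x.2⟩ = Pq b (φ x) := by
      intro b x
      have := hbr (b, 0) _ (hcmem x)
      simp only [hP0l, add_zero] at this
      rw [← hwdφ ⟨P b (x : B), hI b (x : B) x.2⟩ (P b (c x)) this, hPq]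
    refine ⟨φ, ⟨⟨hφadd, hφsmul, hφP⟩, ?_⟩, ?_⟩
    · -- I' = idealOfHom I φ
      ext p
      constructor
      · intro hp
        have hp1 : p.1 ∈ I := by
          have : p.1 ∈ Prod.fst '' I' := ⟨p, hp, rfl⟩
          rwa [hfst] at this
        exact ⟨hp1, hwdφ ⟨p.1, hp1⟩ p.2 (by rwa [Prod.mk.eta])⟩
      · rintro ⟨hp1, hp2⟩
        have hdiff : p.2 - c ⟨p.1, hp1⟩ ∈ I :=
          Ideal.Quotient.eq.1
            (hp2.trans (hwdφ ⟨p.1, hp1⟩ _ (hcmem ⟨p.1, hp1⟩)).symm)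
        have h2 : ((0 : B), p.2 - c ⟨p.1, hp1⟩) ∈ I' := by
          have : p.2 - c ⟨p.1, hp1⟩ ∈ {y : B | ((0 : B), y) ∈ I'} := hker ▸ hdiff
          exact this
        have := hadd _ (hcmem ⟨p.1, hp1⟩) _ h2
        simpa using this
    · -- uniqueness
      rintro ψ ⟨-, rfl⟩
      funext x
      obtain ⟨h1, h2⟩ := hcmem x
      show ψ x = Ideal.Quotient.mk I (c x)
      exact ((h2.trans (congrArg ψ (Subtype.ext rfl)))).symm
  · -- trivial deformation
    ext p
    simp only [idealOfHom, Set.mem_setOf_eq]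
    constructor
    · rintro ⟨h1, h2⟩
      exact ⟨h1, Ideal.Quotient.eq_zero_iff_mem.1 h2⟩
    · rintro ⟨h1, h2⟩
      exact ⟨h1, Ideal.Quotient.eq_zero_iff_mem.2 h2⟩
end

section
/- Let k be a field, let (B, {-,-}) and (B₀, {-,-}₀) be Poisson k-algebras, let φ : B → B₀ be a surjective Poisson k-algebra homomorphism, and let j : B₀ → B be an injective k-linear map with image equal to ker(φ) such that j(φ(b)·x) = b·j(x) and j({φ(b), x}₀) = {b, j(x)} for all b ∈ B and x ∈ B₀. Set e := j(1). Then: (i) e² = 0; (ii) {b, e} = 0 for every b ∈ B; (iii) ker(φ) = e·B; and (iv) {b ∈ B : e·b = 0} = e·B. Consequently the ring homomorphism k[X]/(X²) → B sending X to e makes B into a k[ε]-algebra which is flat over k[ε] and whose bracket is k[ε]-bilinear. -/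
open TensorProduct in
private lemma aux_tensor_gen {R M : Type*} [CommRing R] [AddCommGroup M] [Module R M]
    (I : Ideal R) (g : I) (hg : ∀ x : I, ∃ c : R, (x : R) = c * (g : R))
    (z : TensorProduct R I M) : ∃ m : M, z = g ⊗ₜ[R] m := by
  induction z using TensorProduct.induction_on with
  | zero => exact ⟨0, (TensorProduct.tmul_zero _ _).symm⟩
  | tmul x m =>
      obtain ⟨c, hc⟩ := hg x
      refine ⟨c • m, ?_⟩
      have hx : x = c • g := Subtype.ext (by simpa using hc)
      rw [hx, TensorProduct.smul_tmul]
  | add x y hx hy =>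
      obtain ⟨mx, hmx⟩ := hx
      obtain ⟨my, hmy⟩ := hy
      exact ⟨mx + my, by rw [hmx, hmy, TensorProduct.tmul_add]⟩

set_option maxHeartbeats 1000000 in
set_option synthInstance.maxHeartbeats 400000 in
/-- A short Poisson extension `0 → B₀ →ʲ B →^φ B₀ → 0` of a Poisson algebra `B₀` over `k` by
itself, with `e := j(1)`, satisfies: `e² = 0`, `{b, e} = 0` for all `b`, `ker φ = e·B`, and
the annihilator of `e` equals `e·B`.  Consequently the ring homomorphism `k[ε] → B` sending
`ε` to `e` makes `B` a `k[ε]`-algebra which is flat over `k[ε]` and whose bracket is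
`k[ε]`-bilinear. -/
theorem stmt3 (k B B₀ : Type*) [Field k] [CommRing B] [Algebra k B]
    [CommRing B₀] [Algebra k B₀]
    (P : B → B → B) (P₀ : B₀ → B₀ → B₀)
    -- `(B, P)` is a Poisson `k`-algebra
    (hPaddl : ∀ a b c : B, P (a + b) c = P a c + P b c)
    (hPaddr : ∀ a b c : B, P a (b + c) = P a b + P a c)
    (hPsmull : ∀ (r : k) (a b : B), P (r • a) b = r • P a b)
    (hPsmulr : ∀ (r : k) (a b : B), P a (r • b) = r • P a b)
    (hPanti : ∀ a b : B, P a b = -P b a)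
    (hPjac : ∀ a b c : B, P a (P b c) = P (P a b) c + P b (P a c))
    (hPleib : ∀ a b c : B, P a (b * c) = b * P a c + c * P a b)
    -- `(B₀, P₀)` is a Poisson `k`-algebra
    (hP₀addl : ∀ a b c : B₀, P₀ (a + b) c = P₀ a c + P₀ b c)
    (hP₀addr : ∀ a b c : B₀, P₀ a (b + c) = P₀ a b + P₀ a c)
    (hP₀smull : ∀ (r : k) (a b : B₀), P₀ (r • a) b = r • P₀ a b)
    (hP₀smulr : ∀ (r : k) (a b : B₀), P₀ a (r • b) = r • P₀ a b)
    (hP₀anti : ∀ a b : B₀, P₀ a b = -P₀ b a)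
    (hP₀jac : ∀ a b c : B₀, P₀ a (P₀ b c) = P₀ (P₀ a b) c + P₀ b (P₀ a c))
    (hP₀leib : ∀ a b c : B₀, P₀ a (b * c) = b * P₀ a c + c * P₀ a b)
    -- the surjective Poisson homomorphism `φ`
    (φ : B →ₐ[k] B₀) (hφsurj : Function.Surjective φ)
    (hφP : ∀ u v : B, φ (P u v) = P₀ (φ u) (φ v))
    -- the embedding `j` of the kernel
    (j : B₀ →ₗ[k] B) (hjinj : Function.Injective j)
    (hjrange : Set.range j = {x : B | φ x = 0})
    (hjmod : ∀ (b : B) (x : B₀), j (φ b * x) = b * j x)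
    (hjbr : ∀ (b : B) (x : B₀), j (P₀ (φ b) x) = P b (j x)) :
    (j 1 * j 1 = 0) ∧
    (∀ b : B, P b (j 1) = 0) ∧
    ({x : B | φ x = 0} = {x : B | ∃ b : B, x = j 1 * b}) ∧
    ({b : B | j 1 * b = 0} = {x : B | ∃ b : B, x = j 1 * b}) ∧
    (∃ ρ : DualNumber k →+* B,
      ρ DualNumber.eps = j 1 ∧
      (∀ c : k, ρ (algebraMap k (DualNumber k) c) = algebraMap k B c) ∧
      (∀ (c : DualNumber k) (u v : B), P (ρ c * u) v = ρ c * P u v) ∧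
      (∀ (c : DualNumber k) (u v : B), P u (ρ c * v) = ρ c * P u v) ∧
      @Module.Flat (DualNumber k) B _ _ (Module.compHom B ρ)) := by
  set e : B := j 1 with he
  -- φ vanishes on the range of j
  have hφj : ∀ y : B₀, φ (j y) = 0 := by
    intro y
    have : j y ∈ {x : B | φ x = 0} := hjrange ▸ ⟨y, rfl⟩
    exact this
  -- e² = 0
  have he2 : e * e = 0 := by
    have h := hjmod (j 1) 1
    rw [hφj 1, zero_mul, map_zero] at h
    exact h.symm
  -- P₀ a 1 = 0
  have hP₀1 : ∀ a : B₀, P₀ a 1 = 0 := by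
    intro a
    have h := hP₀leib a 1 1
    simp only [mul_one, one_mul] at h
    exact (left_eq_add.mp h)
  -- {b, e} = 0
  have hPe : ∀ b : B, P b e = 0 := by
    intro b
    have h := hjbr b 1
    rw [hP₀1, map_zero] at h
    exact h.symm
  -- j y = b * e whenever φ b = y
  have hje : ∀ b : B, j (φ b) = b * e := by
    intro b
    have h := hjmod b 1
    rwa [mul_one] at h
  -- kernel of φ equals e·B
  have hker : {x : B | φ x = 0} = {x : B | ∃ b : B, x = e * b} := by
    ext x
    constructor
    · intro hx
      have : x ∈ Set.range j := hjrange ▸ hx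
      obtain ⟨y, rfl⟩ := this
      obtain ⟨b, rfl⟩ := hφsurj y
      exact ⟨b, by rw [hje b, mul_comm]⟩
    · rintro ⟨b, rfl⟩
      have hφe : φ e = 0 := hφj 1
      show φ (e * b) = 0
      rw [map_mul, hφe, zero_mul]
  -- annihilator of e equals e·B
  have hann : {b : B | e * b = 0} = {x : B | ∃ b : B, x = e * b} := by
    ext b
    constructor
    · intro hb
      have h : j (φ b) = 0 := by rw [hje b, mul_comm]; exact hb
      have hφb : φ b = 0 := by
        apply hjinj
        rw [h, map_zero]
      exact (Set.ext_iff.mp hker b).mp hφb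
    · rintro ⟨c, rfl⟩
      show e * (e * c) = 0
      rw [← mul_assoc, he2, zero_mul]
  refine ⟨he2, hPe, hker, hann, ?_⟩
  -- the ring homomorphism ρ : k[ε] → B
  set ρa : DualNumber k →ₐ[k] B :=
    DualNumber.lift ⟨(Algebra.ofId k B, e), he2, fun a => Commute.all _ _⟩ with hρa
  set ρ : DualNumber k →+* B := ρa.toRingHom with hρ
  have hρε : ρ DualNumber.eps = e := DualNumber.lift_apply_eps _
  have hρform : ∀ c : DualNumber k,
      ρ c = algebraMap k B c.fst + algebraMap k B c.snd * e := by
    intro c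
    exact DualNumber.lift_apply_apply _ c
  have hρalg : ∀ c : k, ρ (algebraMap k (DualNumber k) c) = algebraMap k B c :=
    fun c => ρa.commutes c
  -- P (e * u) v = e * P u v
  have hPeu : ∀ u v : B, P (e * u) v = e * P u v := by
    intro u v
    rw [hPanti, hPleib, hPe, mul_zero, add_zero, hPanti u v]
    ring
  have hρmul : ∀ (c : DualNumber k) (u : B),
      ρ c * u = c.fst • u + c.snd • (e * u) := by
    intro c u
    rw [hρform, add_mul, mul_assoc, ← Algebra.smul_def, ← Algebra.smul_def]
  have hbl : ∀ (c : DualNumber k) (u v : B), P (ρ c * u) v = ρ c * P u v := by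
    intro c u v
    rw [hρmul, hPaddl, hPsmull, hPsmull, hPeu, ← hρmul]
  have hbr : ∀ (c : DualNumber k) (u v : B), P u (ρ c * v) = ρ c * P u v := by
    intro c u v
    rw [hPanti, hbl, hPanti v u]
    ring
  refine ⟨ρ, hρε, hρalg, hbl, hbr, ?_⟩
  letI : Module (DualNumber k) B := Module.compHom B ρ
  have hsmul : ∀ (c : DualNumber k) (m : B), c • m = ρ c * m := fun c m => rfl
  show Module.Flat (DualNumber k) B
  rw [Module.Flat.iff_rTensor_injective']
  intro I
  rw [injective_iff_map_eq_zero]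
  intro z hz
  by_cases hI : ∃ x ∈ I, TrivSqZeroExt.fst x ≠ 0
  · -- I = ⊤ : contains a unit, hence 1
    obtain ⟨x, hxI, hx⟩ := hI
    have h1 : (1 : DualNumber k) ∈ I := by
      have : x * (TrivSqZeroExt.inl (TrivSqZeroExt.fst x)⁻¹ +
          (-(TrivSqZeroExt.snd x) * (TrivSqZeroExt.fst x)⁻¹ * (TrivSqZeroExt.fst x)⁻¹) •
          DualNumber.eps) = 1 := by
        ext
        · simp [hx]
        · simp [hx]
          field_simp
          ring
      rw [← this]
      exact Ideal.mul_mem_right _ _ hxI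
    obtain ⟨m, rfl⟩ := aux_tensor_gen I ⟨1, h1⟩ (fun x => ⟨(x : DualNumber k), (mul_one _).symm⟩) z
    have hm : m = 0 := by
      have h := congrArg (TensorProduct.lid (DualNumber k) B) hz
      rw [LinearMap.rTensor_tmul, map_zero, TensorProduct.lid_tmul] at h
      simpa using h
    rw [hm, TensorProduct.tmul_zero]
  · push_neg at hI
    by_cases hε : DualNumber.eps ∈ I
    · -- I = (ε)
      have hgen : ∀ x : I, (x : DualNumber k) =
          TrivSqZeroExt.inl (TrivSqZeroExt.snd (x : DualNumber k)) * DualNumber.eps := by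
        rintro ⟨x, hx⟩
        ext
        · simp [hI x hx]
        · simp
      obtain ⟨m, rfl⟩ := aux_tensor_gen I ⟨DualNumber.eps, hε⟩ (fun x => ⟨_, hgen x⟩) z
      have hem : e * m = 0 := by
        have h := congrArg (TensorProduct.lid (DualNumber k) B) hz
        rw [LinearMap.rTensor_tmul, map_zero, TensorProduct.lid_tmul] at h
        simpa [hsmul, hρε] using h
      have : m ∈ {b : B | e * b = 0} := hem
      rw [hann] at this
      obtain ⟨c, hc⟩ := this
      have hm : m = (DualNumber.eps : DualNumber k) • c := by rw [hsmul, hρε, hc]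
      rw [hm, ← TensorProduct.smul_tmul]
      have : ((DualNumber.eps : DualNumber k) • (⟨DualNumber.eps, hε⟩ : I)) = 0 := by
        apply Subtype.ext
        simpa using DualNumber.eps_mul_eps
      rw [this, TensorProduct.zero_tmul]
    · -- I = ⊥
      have hgen : ∀ x : I, (x : DualNumber k) = 0 := by
        rintro ⟨x, hx⟩
        by_contra hx0
        apply hε
        have hsnd : TrivSqZeroExt.snd x ≠ 0 := by
          intro h
          apply hx0
          ext
          · exact hI x hx
          · exact h
        have : TrivSqZeroExt.inl (R := k) (TrivSqZeroExt.snd x)⁻¹ * x = DualNumber.eps := by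
          ext
          · simp [hI x hx]
          · simp [hI x hx, hsnd]
        rw [← this]
        exact Ideal.mul_mem_left _ _ hx
      obtain ⟨m, rfl⟩ := aux_tensor_gen I ⟨0, I.zero_mem⟩
        (fun x => ⟨0, by rw [hgen x, zero_mul]⟩) z
      have h0 : (⟨0, I.zero_mem⟩ : I) = 0 := rfl
      rw [h0, TensorProduct.zero_tmul]
end

section
/- Let k be a field, (A, {-,-}) a Poisson k-algebra, and S ⊆ A a multiplicative submonoid. Then there exists a unique k-bilinear bracket {-,-}_S on the localization S⁻¹A which is a biderivation (i.e. {u, vw}_S = v·{u,w}_S + w·{u,v}_S and {uv, w}_S = u·{v,w}_S + v·{u,w}_S for all u, v, w) and satisfies {a/1, b/1}_S = {a,b}/1 for all a, b ∈ A. This bracket is antisymmetric and satisfies the Jacobi identity, so (S⁻¹A, {-,-}_S) is a Poisson k-algebra and the canonical map A → S⁻¹A is a Poisson k-algebra homomorphism; on fractions it is given by {a₁/s₁, a₂/s₂}_S = {a₁,a₂}/(s₁s₂) − (a₂·{a₁,s₂})/(s₁s₂²) − (a₁·{s₁,a₂})/(s₁²s₂) + (a₁a₂·{s₁,s₂})/(s₁²s₂²).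 -/
namespace PBaux

variable {k A : Type*} [Field k] [CommRing A] [Algebra k A] {S : Submonoid A}

lemma lcancel (s : S) {x y : Localization S}
    (h : algebraMap A (Localization S) ↑s * x = algebraMap A (Localization S) ↑s * y) :
    x = y :=
  (IsLocalization.map_units (Localization S) s).mul_left_cancel h

lemma mk_one_mulS (s t : S) :
    Localization.mk (1 : A) (s * t) = Localization.mk 1 s * Localization.mk 1 t := by
  rw [Localization.mk_mul, one_mul]

lemma mk_split (a : A) (s : S) :
    Localization.mk a s = algebraMap A (Localization S) a * Localization.mk 1 s := by
  rw [← Localization.mk_one_eq_algebraMap, Localization.mk_mul, mul_one, one_mul]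

lemma mk_inv (s : S) :
    Localization.mk (1 : A) s * algebraMap A (Localization S) ↑s = 1 := by
  rw [← Localization.mk_one_eq_algebraMap, Localization.mk_mul, one_mul, mul_one,
    Localization.mk_self]

lemma mk_mul_alg (a : A) (s : S) :
    Localization.mk a s * algebraMap A (Localization S) ↑s = algebraMap A (Localization S) a := by
  rw [mk_split, mul_assoc, mk_inv, mul_one]

/-- A function on the localization satisfying the product rule is determined by its values
on the image of `A`. -/
lemma uniqLeib (f g : Localization S → Localization S)
    (hf : ∀ x y, f (x * y) = x * f y + y * f x)
    (hg : ∀ x y, g (x * y) = x * g y + y * g x)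
    (h : ∀ a, f (algebraMap A (Localization S) a) = g (algebraMap A (Localization S) a)) :
    f = g := by
  funext x
  induction x using Localization.ind with
  | _ p =>
    obtain ⟨a, s⟩ := p
    have h1 := hf (Localization.mk a s) (algebraMap A (Localization S) ↑s)
    have h2 := hg (Localization.mk a s) (algebraMap A (Localization S) ↑s)
    rw [mk_mul_alg] at h1 h2
    apply lcancel s
    linear_combination (h a) - h1 + h2 - Localization.mk a s * (h ↑s)

/-- Value of a product-rule map on a general fraction. -/
lemma leibVal (f : Localization S → Localization S)
    (hf : ∀ x y, f (x * y) = x * f y + y * f x) (a : A) (s : S) :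
    f (Localization.mk a s) =
      Localization.mk 1 s * f (algebraMap A (Localization S) a) -
        Localization.mk 1 s * (Localization.mk a s * f (algebraMap A (Localization S) ↑s)) := by
  have h1 := hf (Localization.mk a s) (algebraMap A (Localization S) ↑s)
  rw [mk_mul_alg] at h1
  have h2 := mk_inv (S := S) s
  linear_combination (-(Localization.mk 1 s)) * h1 - f (Localization.mk a s) * h2

/-- Raw extension of a derivation `A → S⁻¹A` to a map on `S⁻¹A`. -/
noncomputable def rawext (d : Derivation k A (Localization S)) (x : Localization S) :
    Localization S :=
  Localization.liftOn x
    (fun a s => Localization.mk 1 s * Localization.mk 1 s *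
      (algebraMap A (Localization S) ↑s * d a - algebraMap A (Localization S) a * d ↑s))
    (by
      intro a₁ a₂ s₁ s₂ h
      obtain ⟨u, hu⟩ := Localization.r_iff_exists.1 h
      have hd := congrArg (fun z => d z) hu
      simp only [Derivation.leibniz, smul_add, smul_smul, Algebra.smul_def, map_mul] at hd
      have hm := congrArg (algebraMap A (Localization S)) hu
      simp only [map_mul] at hm
      have hs := mk_inv (S := S) s₁
      have ht := mk_inv (S := S) s₂
      apply lcancel (u * u * (s₁ * s₁ * (s₂ * s₂)))
      simp only [Submonoid.coe_mul, map_mul]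
      set U := algebraMap A (Localization S) ↑u
      set Sg := algebraMap A (Localization S) ↑s₁
      set T := algebraMap A (Localization S) ↑s₂
      set Av := algebraMap A (Localization S) a₁
      set B := algebraMap A (Localization S) a₂
      set Ms := Localization.mk (1:A) s₁
      set Mt := Localization.mk (1:A) s₂
      linear_combination (U*Sg*T) * hd - (U*T*(d ↑s₁) + U*Sg*(d ↑s₂) + Sg*T*(d ↑u)) * hm +
        ((U^2*Sg*T^2*(d a₁) - U^2*T^2*Av*(d ↑s₁))*(Ms*Sg+1)) * hs +
        ((-(U^2*Sg^2*T*(d a₂)) + U^2*Sg^2*B*(d ↑s₂))*(Mt*T+1)) * ht)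

lemma rawext_mk (d : Derivation k A (Localization S)) (a : A) (s : S) :
    rawext d (Localization.mk a s) =
      Localization.mk 1 s * Localization.mk 1 s *
        (algebraMap A (Localization S) ↑s * d a - algebraMap A (Localization S) a * d ↑s) :=
  rfl

/-- The canonical extension of a derivation `A → S⁻¹A` to a derivation on `S⁻¹A`. -/
noncomputable def locExt (d : Derivation k A (Localization S)) :
    Derivation k (Localization S) (Localization S) where
  toFun := rawext d
  map_add' x y := by
    induction x using Localization.ind with
    | _ p =>
      induction y using Localization.ind with
      | _ q =>
        obtain ⟨a, s⟩ := p
        obtain ⟨b, t⟩ := q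
        rw [Localization.add_mk, rawext_mk, rawext_mk, rawext_mk, mk_one_mulS]
        have hs := mk_inv (S := S) s
        have ht := mk_inv (S := S) t
        simp only [Submonoid.coe_mul, map_add, map_mul, Derivation.leibniz, Algebra.smul_def]
        set Sg := algebraMap A (Localization S) ↑s
        set T := algebraMap A (Localization S) ↑t
        set Av := algebraMap A (Localization S) a
        set B := algebraMap A (Localization S) b
        set Ms := Localization.mk (1:A) s
        set Mt := Localization.mk (1:A) t
        linear_combination ((Ms*Sg+1)*(Mt^2*T*(d b) - Mt^2*B*(d ↑t))) * hs +
          ((Mt*T+1)*(Ms^2*Sg*(d a) - Ms^2*Av*(d ↑s))) * ht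
  map_smul' c x := by
    induction x using Localization.ind with
    | _ p =>
      obtain ⟨a, s⟩ := p
      simp only [RingHom.id_apply, Localization.smul_mk, rawext_mk]
      simp only [Algebra.smul_def, Derivation.leibniz, Derivation.map_algebraMap, map_mul,
        IsScalarTower.algebraMap_apply k A (Localization S)]
      ring
  map_one_eq_zero' := by
    show rawext d 1 = 0
    rw [← Localization.mk_one, rawext_mk]
    simp
  leibniz' x y := by
    show rawext d (x * y) = x • rawext d y + y • rawext d x
    induction x using Localization.ind with
    | _ p =>
      induction y using Localization.ind with
      | _ q =>
        obtain ⟨a, s⟩ := p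
        obtain ⟨b, t⟩ := q
        rw [Localization.mk_mul, rawext_mk, rawext_mk, rawext_mk, smul_eq_mul, smul_eq_mul,
          mk_one_mulS, mk_split a s, mk_split b t]
        have hs := mk_inv (S := S) s
        have ht := mk_inv (S := S) t
        simp only [Submonoid.coe_mul, map_mul, Derivation.leibniz, Algebra.smul_def]
        set Sg := algebraMap A (Localization S) ↑s
        set T := algebraMap A (Localization S) ↑t
        set Av := algebraMap A (Localization S) a
        set B := algebraMap A (Localization S) b
        set Ms := Localization.mk (1:A) s
        set Mt := Localization.mk (1:A) t
        linear_combination (Ms*Mt^2*(Av*T*(d b) - Av*B*(d ↑t))) * hs +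
          (Mt*Ms^2*(B*Sg*(d a) - Av*B*(d ↑s))) * ht

lemma locExt_mk (d : Derivation k A (Localization S)) (a : A) (s : S) :
    locExt d (Localization.mk a s) =
      Localization.mk 1 s * Localization.mk 1 s *
        (algebraMap A (Localization S) ↑s * d a - algebraMap A (Localization S) a * d ↑s) :=
  rfl

lemma locExt_alg (d : Derivation k A (Localization S)) (a : A) :
    locExt d (algebraMap A (Localization S) a) = d a := by
  rw [← Localization.mk_one_eq_algebraMap, locExt_mk]
  simp [Localization.mk_one]

lemma locExt_leib (d : Derivation k A (Localization S)) (x y : Localization S) :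
    locExt d (x * y) = x * locExt d y + y * locExt d x := by
  rw [Derivation.leibniz, smul_eq_mul, smul_eq_mul]

lemma locExt_of_zero (d : Derivation k A (Localization S)) (h : ∀ a, d a = 0)
    (x : Localization S) : locExt d x = 0 := by
  have := uniqLeib (S := S) (fun z => locExt d z) (fun _ => 0)
    (fun x y => locExt_leib d x y) (by intro x y; ring)
    (by intro a; rw [locExt_alg, h])
  exact congrFun this x

section P

variable (P : A → A → A)

/-- The hamiltonian derivation `P a (-)`, valued in the localization. -/
noncomputable def pDer
    (h2 : ∀ a b c : A, P a (b + c) = P a b + P a c)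
    (h4 : ∀ (r : k) (a b : A), P a (r • b) = r • P a b)
    (h7 : ∀ a b c : A, P a (b * c) = b * P a c + c * P a b)
    (a : A) : Derivation k A (Localization S) where
  toFun b := algebraMap A (Localization S) (P a b)
  map_add' b c := by
    show algebraMap A (Localization S) (P a (b + c)) =
      algebraMap A (Localization S) (P a b) + algebraMap A (Localization S) (P a c)
    rw [h2, map_add]
  map_smul' c b := by
    show algebraMap A (Localization S) (P a (c • b)) = RingHom.id k c • algebraMap A (Localization S) (P a b)
    rw [h4, RingHom.id_apply, Algebra.smul_def, Algebra.smul_def, map_mul,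
      IsScalarTower.algebraMap_apply k A (Localization S)]
  map_one_eq_zero' := by
    have h := h7 a 1 1
    simp only [mul_one, one_mul] at h
    have h0 : P a 1 = 0 := by linear_combination -h
    show algebraMap A (Localization S) (P a 1) = 0
    rw [h0, map_zero]
  leibniz' b c := by
    show algebraMap A (Localization S) (P a (b * c)) = _
    rw [h7, map_add, map_mul, map_mul, Algebra.smul_def, Algebra.smul_def]
    rfl

lemma pDer_apply (h2 : ∀ a b c : A, P a (b + c) = P a b + P a c)
    (h4 : ∀ (r : k) (a b : A), P a (r • b) = r • P a b)
    (h7 : ∀ a b c : A, P a (b * c) = b * P a c + c * P a b) (a b : A) :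
    pDer (S := S) P h2 h4 h7 a b = algebraMap A (Localization S) (P a b) := rfl

lemma pOne (h5 : ∀ a b : A, P a b = -P b a)
    (h7 : ∀ a b c : A, P a (b * c) = b * P a c + c * P a b) (a : A) :
    P (1 : A) a = 0 := by
  have h := h7 a 1 1
  simp only [mul_one, one_mul] at h
  linear_combination h5 1 a + h

/-- The derivation `a ↦ {a, v}` for a fixed element `v` of the localization. -/
noncomputable def pDer2
    (h1 : ∀ a b c : A, P (a + b) c = P a c + P b c)
    (h2 : ∀ a b c : A, P a (b + c) = P a b + P a c)
    (h3 : ∀ (r : k) (a b : A), P (r • a) b = r • P a b)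
    (h4 : ∀ (r : k) (a b : A), P a (r • b) = r • P a b)
    (h5 : ∀ a b : A, P a b = -P b a)
    (h7 : ∀ a b c : A, P a (b * c) = b * P a c + c * P a b)
    (v : Localization S) : Derivation k A (Localization S) where
  toFun a := locExt (pDer (S := S) P h2 h4 h7 a) v
  map_add' a b := by
    have key := uniqLeib (S := S)
      (fun x => locExt (pDer (S := S) P h2 h4 h7 (a + b)) x)
      (fun x => locExt (pDer (S := S) P h2 h4 h7 a) x + locExt (pDer (S := S) P h2 h4 h7 b) x)
      (by intro x y; rw [locExt_leib])
      (by intro x y; rw [locExt_leib, locExt_leib]; ring)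
      (by intro c; simp only [locExt_alg, pDer_apply, h1, map_add])
    exact congrFun key v
  map_smul' c a := by
    simp only [RingHom.id_apply]
    have key := uniqLeib (S := S)
      (fun x => locExt (pDer (S := S) P h2 h4 h7 (c • a)) x)
      (fun x => c • locExt (pDer (S := S) P h2 h4 h7 a) x)
      (by intro x y; rw [locExt_leib])
      (by intro x y; rw [locExt_leib, smul_add, mul_smul_comm, mul_smul_comm])
      (by
        intro b
        rw [locExt_alg, locExt_alg, pDer_apply, pDer_apply, h3, Algebra.smul_def,
          Algebra.smul_def, map_mul, IsScalarTower.algebraMap_apply k A (Localization S)])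
    exact congrFun key v
  map_one_eq_zero' := by
    show locExt (pDer (S := S) P h2 h4 h7 1) v = 0
    exact locExt_of_zero _ (fun b => by rw [pDer_apply, pOne P h5 h7, map_zero]) v
  leibniz' a b := by
    have hab : ∀ x : A, P (a * b) x = a * P b x + b * P a x := by
      intro x
      linear_combination h5 (a * b) x - h7 x a b - a * h5 b x - b * h5 a x
    have key := uniqLeib (S := S)
      (fun x => locExt (pDer (S := S) P h2 h4 h7 (a * b)) x)
      (fun x => algebraMap A (Localization S) a * locExt (pDer (S := S) P h2 h4 h7 b) x +
        algebraMap A (Localization S) b * locExt (pDer (S := S) P h2 h4 h7 a) x)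
      (by intro x y; rw [locExt_leib])
      (by intro x y; rw [locExt_leib, locExt_leib]; ring)
      (by intro c; simp only [locExt_alg, pDer_apply, hab, map_add, map_mul])
    have := congrFun key v
    show locExt (pDer (S := S) P h2 h4 h7 (a * b)) v =
      a • locExt (pDer (S := S) P h2 h4 h7 b) v + b • locExt (pDer (S := S) P h2 h4 h7 a) v
    rw [Algebra.smul_def, Algebra.smul_def]
    exact this


/-- The localized Poisson bracket. -/
noncomputable def locQ
    (h1 : ∀ a b c : A, P (a + b) c = P a c + P b c)
    (h2 : ∀ a b c : A, P a (b + c) = P a b + P a c)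
    (h3 : ∀ (r : k) (a b : A), P (r • a) b = r • P a b)
    (h4 : ∀ (r : k) (a b : A), P a (r • b) = r • P a b)
    (h5 : ∀ a b : A, P a b = -P b a)
    (h7 : ∀ a b c : A, P a (b * c) = b * P a c + c * P a b)
    (u v : Localization S) : Localization S :=
  locExt (pDer2 (S := S) P h1 h2 h3 h4 h5 h7 v) u

lemma locQ_alg
    (h1 : ∀ a b c : A, P (a + b) c = P a c + P b c)
    (h2 : ∀ a b c : A, P a (b + c) = P a b + P a c)
    (h3 : ∀ (r : k) (a b : A), P (r • a) b = r • P a b)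
    (h4 : ∀ (r : k) (a b : A), P a (r • b) = r • P a b)
    (h5 : ∀ a b : A, P a b = -P b a)
    (h7 : ∀ a b c : A, P a (b * c) = b * P a c + c * P a b)
    (a : A) (v : Localization S) :
    locQ (S := S) P h1 h2 h3 h4 h5 h7 (algebraMap A (Localization S) a) v =
      locExt (pDer (S := S) P h2 h4 h7 a) v := by
  unfold locQ
  rw [locExt_alg]
  rfl

end P

end PBaux
/-- The defining properties of the localized Poisson bracket: `k`-bilinearity (with the
`k`-action expressed through the structure maps), the biderivation property in each slot,
and compatibility with the canonical map `A → S⁻¹A`. -/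
def LocBracketProps (k : Type*) {A : Type*} [Field k] [CommRing A] [Algebra k A]
    (P : A → A → A) (S : Submonoid A)
    (Q : Localization S → Localization S → Localization S) : Prop :=
  (∀ u v w : Localization S, Q (u + v) w = Q u w + Q v w) ∧
  (∀ u v w : Localization S, Q u (v + w) = Q u v + Q u w) ∧
  (∀ (c : k) (u v : Localization S),
    Q (algebraMap A (Localization S) (algebraMap k A c) * u) v =
      algebraMap A (Localization S) (algebraMap k A c) * Q u v) ∧
  (∀ (c : k) (u v : Localization S),
    Q u (algebraMap A (Localization S) (algebraMap k A c) * v) =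
      algebraMap A (Localization S) (algebraMap k A c) * Q u v) ∧
  (∀ u v w : Localization S, Q u (v * w) = v * Q u w + w * Q u v) ∧
  (∀ u v w : Localization S, Q (u * v) w = u * Q v w + v * Q u w) ∧
  (∀ a b : A, Q (algebraMap A (Localization S) a) (algebraMap A (Localization S) b) =
    algebraMap A (Localization S) (P a b))

/-- A Poisson bracket on a `k`-algebra `A` extends uniquely to a `k`-bilinear biderivation on
any localization `S⁻¹A`, which is again a Poisson bracket (antisymmetric, Jacobi), for which
the canonical map is a Poisson homomorphism, and which is given on fractions by the displayed
formula. -/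
theorem stmt9 (k A : Type*) [Field k] [CommRing A] [Algebra k A]
    (P : A → A → A)
    -- `(A, P)` is a Poisson `k`-algebra
    (hPaddl : ∀ a b c : A, P (a + b) c = P a c + P b c)
    (hPaddr : ∀ a b c : A, P a (b + c) = P a b + P a c)
    (hPsmull : ∀ (r : k) (a b : A), P (r • a) b = r • P a b)
    (hPsmulr : ∀ (r : k) (a b : A), P a (r • b) = r • P a b)
    (hPanti : ∀ a b : A, P a b = -P b a)
    (hPjac : ∀ a b c : A, P a (P b c) = P (P a b) c + P b (P a c))
    (hPleib : ∀ a b c : A, P a (b * c) = b * P a c + c * P a b)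
    (S : Submonoid A) :
    ∃ Q : Localization S → Localization S → Localization S,
      LocBracketProps k P S Q ∧
      (∀ Q' : Localization S → Localization S → Localization S,
        LocBracketProps k P S Q' → Q' = Q) ∧
      (∀ u v : Localization S, Q u v = -Q v u) ∧
      (∀ u v w : Localization S, Q u (Q v w) = Q (Q u v) w + Q v (Q u w)) ∧
      (∀ (a₁ a₂ : A) (s₁ s₂ : S),
        Q (Localization.mk a₁ s₁) (Localization.mk a₂ s₂) =
          Localization.mk (P a₁ a₂) (s₁ * s₂) -
            Localization.mk (a₂ * P a₁ (s₂ : A)) (s₁ * (s₂ * s₂)) -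
            Localization.mk (a₁ * P (s₁ : A) a₂) (s₁ * s₁ * s₂) +
            Localization.mk (a₁ * a₂ * P (s₁ : A) (s₂ : A)) (s₁ * s₁ * (s₂ * s₂))) := by
  refine ⟨PBaux.locQ (S := S) P hPaddl hPaddr hPsmull hPsmulr hPanti hPleib, ?_⟩
  set Q := PBaux.locQ (S := S) P hPaddl hPaddr hPsmull hPsmulr hPanti hPleib with hQs
  have hQdef : ∀ u v, Q u v =
      PBaux.locExt (PBaux.pDer2 (S := S) P hPaddl hPaddr hPsmull hPsmulr hPanti hPleib v) u :=
    fun u v => rfl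
  have hQalg : ∀ (a : A) (v : Localization S), Q (algebraMap A (Localization S) a) v =
      PBaux.locExt (PBaux.pDer (S := S) P hPaddr hPsmulr hPleib a) v :=
    fun a v => PBaux.locQ_alg (S := S) P hPaddl hPaddr hPsmull hPsmulr hPanti hPleib a v
  have p6 : ∀ u v w, Q (u * v) w = u * Q v w + v * Q u w := by
    intro u v w
    rw [hQdef, hQdef, hQdef]
    exact PBaux.locExt_leib _ u v
  have p1 : ∀ u v w, Q (u + v) w = Q u w + Q v w := by
    intro u v w
    rw [hQdef, hQdef, hQdef]
    exact map_add _ u v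
  have p7 : ∀ a b : A, Q (algebraMap A (Localization S) a) (algebraMap A (Localization S) b) =
      algebraMap A (Localization S) (P a b) := by
    intro a b
    rw [hQalg, PBaux.locExt_alg, PBaux.pDer_apply]
  have p5 : ∀ u v w, Q u (v * w) = v * Q u w + w * Q u v := by
    intro u v w
    have key := PBaux.uniqLeib (S := S) (fun x => Q x (v * w)) (fun x => v * Q x w + w * Q x v)
      (fun x y => p6 x y (v * w))
      (fun x y => by rw [p6 x y w, p6 x y v]; ring)
      (fun a => by
        rw [hQalg a (v * w), PBaux.locExt_leib, ← hQalg a w, ← hQalg a v])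
    exact congrFun key u
  have p2 : ∀ u v w, Q u (v + w) = Q u v + Q u w := by
    intro u v w
    have key := PBaux.uniqLeib (S := S) (fun x => Q x (v + w)) (fun x => Q x v + Q x w)
      (fun x y => p6 x y (v + w))
      (fun x y => by rw [p6 x y v, p6 x y w]; ring)
      (fun a => by rw [hQalg, hQalg, hQalg]; exact map_add _ v w)
    exact congrFun key u
  have huniq : ∀ Q' : Localization S → Localization S → Localization S,
      (∀ u v w, Q' u (v * w) = v * Q' u w + w * Q' u v) →
      (∀ u v w, Q' (u * v) w = u * Q' v w + v * Q' u w) →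
      (∀ a b : A, Q' (algebraMap A (Localization S) a) (algebraMap A (Localization S) b) =
        algebraMap A (Localization S) (P a b)) →
      Q' = Q := by
    intro Q' q5 q6 q7
    have step1 : ∀ a : A, (fun v => Q' (algebraMap A (Localization S) a) v) =
        fun v => Q (algebraMap A (Localization S) a) v := by
      intro a
      exact PBaux.uniqLeib (S := S) _ _ (fun x y => q5 _ x y) (fun x y => p5 _ x y)
        (fun b => by rw [q7, p7])
    funext u v
    have step2 := PBaux.uniqLeib (S := S) (fun x => Q' x v) (fun x => Q x v)
      (fun x y => q6 x y v) (fun x y => p6 x y v)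
      (fun a => congrFun (step1 a) v)
    exact congrFun step2 u
  have hanti : ∀ u v, Q u v = -Q v u := by
    have key := huniq (fun u v => -Q v u)
      (fun u v w => by rw [p6 v w u]; ring)
      (fun u v w => by rw [p5 w u v]; ring)
      (fun a b => by rw [p7 b a, ← map_neg, ← hPanti a b])
    intro u v
    exact (congrFun (congrFun key u) v).symm
  have hz2 : ∀ u, Q u 0 = 0 := by
    intro u
    have h := p2 u 0 0
    rw [add_zero] at h
    linear_combination -h
  have hneg2 : ∀ u x, Q u (-x) = -Q u x := by
    intro u x
    have h := p2 u x (-x)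
    rw [add_neg_cancel] at h
    linear_combination hz2 u - h
  let J : Localization S → Localization S → Localization S → Localization S :=
    fun u v w => Q u (Q v w) + Q v (Q w u) + Q w (Q u v)
  have hJcyc : ∀ u v w, J u v w = J v w u := by
    intro u v w
    show Q u (Q v w) + Q v (Q w u) + Q w (Q u v) = Q v (Q w u) + Q w (Q u v) + Q u (Q v w)
    ring
  have hJleib : ∀ u u' v w, J (u * u') v w = u * J u' v w + u' * J u v w := by
    intro u u' v w
    show Q (u * u') (Q v w) + Q v (Q w (u * u')) + Q w (Q (u * u') v) =
      u * (Q u' (Q v w) + Q v (Q w u') + Q w (Q u' v)) +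
        u' * (Q u (Q v w) + Q v (Q w u) + Q w (Q u v))
    rw [p6 u u' (Q v w), p5 w u u', p6 u u' v,
      p2 v (u * Q w u') (u' * Q w u), p5 v u (Q w u'), p5 v u' (Q w u),
      p2 w (u * Q u' v) (u' * Q u v), p5 w u (Q u' v), p5 w u' (Q u v)]
    linear_combination (Q w u') * hanti v u + (Q w u) * hanti v u'
  have hA : ∀ a b c : A, P a (P b c) + P b (P c a) + P c (P a b) = 0 := by
    intro a b c
    have e1 := hPjac a b c
    have e3 := hPanti c (P a b)
    have e4 : P b (P c a) = -P b (P a c) := by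
      rw [hPanti c a]
      have h0 : P b 0 = 0 := by
        have h' := hPaddr b 0 0
        rw [add_zero] at h'
        linear_combination -h'
      have h1 := hPaddr b (P a c) (-(P a c))
      rw [add_neg_cancel, h0] at h1
      linear_combination -h1
    linear_combination e1 + e4 + e3
  have step1 : ∀ (b c : A) (u : Localization S),
      J u (algebraMap A (Localization S) b) (algebraMap A (Localization S) c) = 0 := by
    intro b c u
    have key := PBaux.uniqLeib (S := S)
      (fun x => J x (algebraMap A (Localization S) b) (algebraMap A (Localization S) c))
      (fun _ => 0)
      (fun x y => by exact hJleib x y _ _)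
      (fun x y => by ring)
      (fun a => by
        show Q (algebraMap A (Localization S) a)
            (Q (algebraMap A (Localization S) b) (algebraMap A (Localization S) c)) +
          Q (algebraMap A (Localization S) b)
            (Q (algebraMap A (Localization S) c) (algebraMap A (Localization S) a)) +
          Q (algebraMap A (Localization S) c)
            (Q (algebraMap A (Localization S) a) (algebraMap A (Localization S) b)) = 0
        rw [p7 b c, p7 c a, p7 a b, p7 a (P b c), p7 b (P c a), p7 c (P a b),
          ← map_add, ← map_add, hA a b c, map_zero])
    exact congrFun key u
  have step2 : ∀ (c : A) (u v : Localization S),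
      J u v (algebraMap A (Localization S) c) = 0 := by
    intro c u v
    have key := PBaux.uniqLeib (S := S)
      (fun x => J u x (algebraMap A (Localization S) c)) (fun _ => 0)
      (fun x y => by
        rw [hJcyc u (x * y) (algebraMap A (Localization S) c),
          hJleib x y (algebraMap A (Localization S) c) u,
          ← hJcyc u y (algebraMap A (Localization S) c),
          ← hJcyc u x (algebraMap A (Localization S) c)])
      (fun x y => by ring)
      (fun a => by exact step1 a c u)
    exact congrFun key v
  have hJz : ∀ u v w, J u v w = 0 := by
    intro u v w
    have key := PBaux.uniqLeib (S := S) (fun x => J u v x) (fun _ => 0)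
      (fun x y => by
        rw [hJcyc u v (x * y), hJcyc v (x * y) u, hJleib x y u v,
          ← hJcyc v x u, ← hJcyc u v x, ← hJcyc v y u, ← hJcyc u v y])
      (fun x y => by ring)
      (fun a => by exact step2 a u v)
    exact congrFun key w
  have hjac : ∀ u v w, Q u (Q v w) = Q (Q u v) w + Q v (Q u w) := by
    intro u v w
    have hJ : Q u (Q v w) + Q v (Q w u) + Q w (Q u v) = 0 := hJz u v w
    have e1 := hanti (Q u v) w
    have e2 := congrArg (fun z => Q v z) (hanti w u)
    have e3 := hneg2 v (Q u w)
    linear_combination hJ - e1 - e2 - e3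
  have hzr : ∀ (c : k) (v : Localization S),
      Q (algebraMap A (Localization S) (algebraMap k A c)) v = 0 := by
    intro c v
    rw [hQalg]
    refine PBaux.locExt_of_zero _ (fun b => ?_) v
    rw [PBaux.pDer_apply]
    have h0 : P (algebraMap k A c) b = 0 := by
      rw [Algebra.algebraMap_eq_smul_one, hPsmull, PBaux.pOne P hPanti hPleib, smul_zero]
    rw [h0, map_zero]
  have p3 : ∀ (c : k) (u v : Localization S),
      Q (algebraMap A (Localization S) (algebraMap k A c) * u) v =
        algebraMap A (Localization S) (algebraMap k A c) * Q u v := by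
    intro c u v
    have h := p6 (algebraMap A (Localization S) (algebraMap k A c)) u v
    rw [hzr c v, mul_zero, add_zero] at h
    exact h
  have p4 : ∀ (c : k) (u v : Localization S),
      Q u (algebraMap A (Localization S) (algebraMap k A c) * v) =
        algebraMap A (Localization S) (algebraMap k A c) * Q u v := by
    intro c u v
    have e1 := hanti u (algebraMap A (Localization S) (algebraMap k A c) * v)
    have e2 := p6 (algebraMap A (Localization S) (algebraMap k A c)) v u
    have e3 := hzr c u
    have e4 := hanti v u
    linear_combination e1 - e2 - v * e3 - (algebraMap A (Localization S) (algebraMap k A c)) * e4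
  have hform : ∀ (a₁ a₂ : A) (s₁ s₂ : S),
      Q (Localization.mk a₁ s₁) (Localization.mk a₂ s₂) =
        Localization.mk (P a₁ a₂) (s₁ * s₂) -
          Localization.mk (a₂ * P a₁ (s₂ : A)) (s₁ * (s₂ * s₂)) -
          Localization.mk (a₁ * P (s₁ : A) a₂) (s₁ * s₁ * s₂) +
          Localization.mk (a₁ * a₂ * P (s₁ : A) (s₂ : A)) (s₁ * s₁ * (s₂ * s₂)) := by
    intro a₁ a₂ s₁ s₂
    have lv1 := PBaux.leibVal (S := S) (fun u => Q u (Localization.mk a₂ s₂))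
      (fun x y => p6 x y (Localization.mk a₂ s₂)) a₁ s₁
    have lv2 : ∀ c : A, Q (algebraMap A (Localization S) c) (Localization.mk a₂ s₂) =
        Localization.mk 1 s₂ *
            Q (algebraMap A (Localization S) c) (algebraMap A (Localization S) a₂) -
          Localization.mk 1 s₂ * (Localization.mk a₂ s₂ *
            Q (algebraMap A (Localization S) c) (algebraMap A (Localization S) ↑s₂)) :=
      fun c => PBaux.leibVal (S := S) (Q (algebraMap A (Localization S) c))
        (fun x y => p5 (algebraMap A (Localization S) c) x y) a₂ s₂
    rw [lv1, lv2 a₁, lv2 ↑s₁, p7 a₁ a₂, p7 a₁ ↑s₂, p7 ↑s₁ a₂, p7 ↑s₁ ↑s₂]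
    rw [PBaux.mk_split (P a₁ a₂) (s₁ * s₂),
      PBaux.mk_split (a₂ * P a₁ ↑s₂) (s₁ * (s₂ * s₂)),
      PBaux.mk_split (a₁ * P ↑s₁ a₂) (s₁ * s₁ * s₂),
      PBaux.mk_split (a₁ * a₂ * P ↑s₁ ↑s₂) (s₁ * s₁ * (s₂ * s₂)),
      PBaux.mk_split a₁ s₁, PBaux.mk_split a₂ s₂]
    simp only [PBaux.mk_one_mulS, map_mul]
    ring
  exact ⟨⟨p1, p2, p3, p4, p5, p6, p7⟩,
    (fun Q' hQ' => by
      obtain ⟨q1, q2, q3, q4, q5, q6, q7⟩ := hQ'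
      exact huniq Q' q5 q6 q7),
    hanti, hjac, hform⟩
end

section
/- Let m ≥ 1 be a natural number, let b ∈ ℂ satisfy 0 < |b| < 1, and set a := b^m. Let f : ℂ × ℂ × ℂ → ℂ be holomorphic (complex differentiable at every point) and suppose that f(a·z₁ + t·z₂^m, b·z₂, t) = a·b·f(z₁, z₂, t) for all z₁, z₂, t ∈ ℂ. Then there exists a holomorphic function g : ℂ → ℂ such that f(z₁, z₂, t) = g(t)·z₂^{m+1} for all z₁, z₂, t ∈ ℂ. -/
open Metric Filter Set Nat
open scoped Topology NNReal Real

/-- Cauchy estimate for entire functions: `‖F⁽ᵏ⁾(0)‖ ≤ k! M / Rᵏ`. -/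
lemma cauchy_bound_aux {F : ℂ → ℂ} (hF : Differentiable ℂ F) {R M : ℝ} (hR : 0 < R)
    (hM : ∀ w : ℂ, ‖w‖ = R → ‖F w‖ ≤ M) (k : ℕ) :
    ‖iteratedDeriv k F 0‖ ≤ (k ! : ℝ) * M / R ^ k := by
  have hM0 : 0 ≤ M := by
    refine le_trans (norm_nonneg (F R)) (hM R ?_)
    simp [Complex.norm_real, abs_of_nonneg hR.le]
  lift R to ℝ≥0 using hR.le with R hRR
  have hR' : 0 < R := by exact_mod_cast hR
  have h := hF.hasFPowerSeriesOnBall (0 : ℂ) hR'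
  have hcoeff : iteratedDeriv k F 0 = k ! • ((cauchyPowerSeries F 0 R k) fun _ => (1 : ℂ)) := by
    rw [iteratedDeriv_eq_iteratedFDeriv, ← h.factorial_smul (1 : ℂ) k]
  have hint : ∫ θ in (0 : ℝ)..2 * π, ‖F (circleMap 0 R θ)‖ ≤ M * (2 * π) := by
    have h4 := intervalIntegral.norm_integral_le_of_norm_le_const
      (C := M) (f := fun θ : ℝ => ‖F (circleMap 0 R θ)‖) (a := 0) (b := 2 * π) ?_
    · calc ∫ θ in (0 : ℝ)..2 * π, ‖F (circleMap 0 R θ)‖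
          ≤ |∫ θ in (0 : ℝ)..2 * π, ‖F (circleMap 0 R θ)‖| := le_abs_self _
        _ ≤ M * |2 * π - 0| := h4
        _ = M * (2 * π) := by rw [sub_zero, abs_of_nonneg Real.two_pi_pos.le]
    · intro θ _
      rw [Real.norm_eq_abs, abs_of_nonneg (norm_nonneg _)]
      refine hM _ ?_
      simp [norm_circleMap_zero, abs_of_nonneg R.coe_nonneg]
  have h1 : ‖(cauchyPowerSeries F 0 R k) fun _ => (1 : ℂ)‖ ≤ ‖cauchyPowerSeries F 0 R k‖ := by
    simpa using (cauchyPowerSeries F 0 R k).le_opNorm fun _ => (1 : ℂ)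
  have h2 := norm_cauchyPowerSeries_le F 0 R k
  have h3 : ‖cauchyPowerSeries F 0 R k‖ ≤ M / R ^ k := by
    refine h2.trans ?_
    have hπ : (0 : ℝ) < 2 * π := Real.two_pi_pos
    have : ((2 * π)⁻¹ * ∫ θ : ℝ in (0)..2 * π, ‖F (circleMap 0 R θ)‖) ≤ M := by
      rw [inv_mul_le_iff₀ hπ]
      linarith [hint]
    calc ((2 * π)⁻¹ * ∫ θ : ℝ in (0)..2 * π, ‖F (circleMap 0 R θ)‖) * |(R : ℝ)|⁻¹ ^ k
        ≤ M * |(R : ℝ)|⁻¹ ^ k := by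
          refine mul_le_mul_of_nonneg_right this (by positivity)
      _ = M / R ^ k := by
          rw [abs_of_nonneg R.coe_nonneg, div_eq_mul_inv, inv_pow]
  rw [hcoeff, nsmul_eq_mul, norm_mul, Complex.norm_natCast]
  calc (k ! : ℝ) * ‖(cauchyPowerSeries F 0 R k) fun _ => (1 : ℂ)‖
      ≤ (k ! : ℝ) * (M / R ^ k) := by
        refine mul_le_mul_of_nonneg_left (h1.trans h3) (by positivity)
    _ = (k ! : ℝ) * M / R ^ k := by ring

/-- The core lemma: `f (z₁ wᵐ, w, t) = f (z₁, 1, t) w^(m+1)`. -/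
lemma key_aux (m : ℕ) (hm : 1 ≤ m) (b : ℂ) (hb0 : 0 < ‖b‖)
    (hb1 : ‖b‖ < 1)
    (f : ℂ × ℂ × ℂ → ℂ) (hf : Differentiable ℂ f)
    (heq : ∀ z₁ z₂ t : ℂ,
      f (b ^ m * z₁ + t * z₂ ^ m, b * z₂, t) = b ^ m * b * f (z₁, z₂, t))
    (t : ℂ) : ∀ z₁ w : ℂ, f (z₁ * w ^ m, w, t) = f (z₁, 1, t) * w ^ (m + 1) := by
  have hbne : b ≠ 0 := by
    intro h; rw [h] at hb0; simp at hb0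
  have hnb1 : ‖b‖ < 1 := hb1
  have hnb0 : 0 < ‖b‖ := hb0
  have hbmne : b ^ m ≠ 0 := pow_ne_zero _ hbne
  set c : ℂ := t / b ^ m with hc
  set F : ℂ → ℂ → ℂ := fun z₁ w => f (z₁ * w ^ m, w, t) with hF
  have hFd : ∀ z₁, Differentiable ℂ (F z₁) := by
    intro z₁
    apply hf.comp
    fun_prop
  have hFeq : ∀ z₁ w, F (z₁ + c) (b * w) = b ^ m * b * F z₁ w := by
    intro z₁ w
    have h1 : (z₁ + c) * (b * w) ^ m = b ^ m * (z₁ * w ^ m) + t * w ^ m := by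
      rw [hc]; field_simp; ring
    simp only [hF]
    rw [h1, heq (z₁ * w ^ m) w t]
  set D : ℂ → ℕ → ℂ := fun z₁ k => iteratedDeriv k (F z₁) 0 with hD
  have hrec : ∀ z₁ k, b ^ k * D (z₁ + c) k = b ^ m * b * D z₁ k := by
    intro z₁ k
    have h1 : iteratedDeriv k (fun w => F (z₁ + c) (b * w)) 0 = b ^ k * D (z₁ + c) k := by
      rw [iteratedDeriv_comp_const_mul ((hFd _).contDiff) b]
      simp [hD]
    have h2 : iteratedDeriv k (fun w => b ^ m * b * F z₁ w) 0 = b ^ m * b * D z₁ k := by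
      have := iteratedDerivWithin_const_mul (n := k) (Set.mem_univ (0 : ℂ)) uniqueDiffOn_univ
        (b ^ m * b) ((hFd z₁).contDiff.contDiffOn (s := Set.univ) 0 (Set.mem_univ 0))
      simpa [iteratedDerivWithin_univ, hD] using this
    rw [← h1, ← h2]
    congr 1
    funext w
    exact hFeq z₁ w
  -- global bound on the unit polydisc
  obtain ⟨M, hM⟩ : ∃ M : ℝ, ∀ x ∈ (closedBall (0 : ℂ) 1 ×ˢ (closedBall (0 : ℂ) 1 ×ˢ {t})),
      ‖f x‖ ≤ M := by
    have hK : IsCompact (closedBall (0 : ℂ) 1 ×ˢ (closedBall (0 : ℂ) 1 ×ˢ {t})) :=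
      (isCompact_closedBall _ _).prod ((isCompact_closedBall _ _).prod isCompact_singleton)
    obtain ⟨M, hM⟩ := hK.exists_bound_of_continuousOn hf.continuous.continuousOn
    exact ⟨M, hM⟩
  have hM0 : 0 ≤ M := le_trans (norm_nonneg _) (hM (0, 0, t) (by simp))
  have hDbound : ∀ z₁ k, ‖D z₁ k‖ ≤ (k ! : ℝ) * M * (1 + ‖z₁‖) ^ k := by
    intro z₁ k
    have h1z : (0 : ℝ) < 1 + ‖z₁‖ := by positivity
    set R : ℝ := (1 + ‖z₁‖)⁻¹ with hR
    have hRpos : 0 < R := by positivity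
    have hRle1 : R ≤ 1 := by
      rw [hR]
      rw [inv_le_one_iff₀]
      right
      linarith [norm_nonneg z₁]
    have hbd : ∀ w : ℂ, ‖w‖ = R → ‖F z₁ w‖ ≤ M := by
      intro w hw
      refine hM (z₁ * w ^ m, w, t) ?_
      have hwm : ‖w‖ ^ m ≤ R := by
        rw [hw]
        calc R ^ m ≤ R ^ 1 := pow_le_pow_of_le_one hRpos.le hRle1 hm
          _ = R := pow_one R
      constructor
      · rw [mem_closedBall_zero_iff]
        calc ‖z₁ * w ^ m‖ = ‖z₁‖ * ‖w‖ ^ m := by rw [norm_mul, norm_pow]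
          _ ≤ ‖z₁‖ * R := by
              exact mul_le_mul_of_nonneg_left hwm (norm_nonneg _)
          _ ≤ 1 := by
              rw [hR]
              rw [mul_inv_le_iff₀ h1z]
              linarith
      · constructor
        · rw [mem_closedBall_zero_iff]
          rw [hw]; exact hRle1
        · simp
    have := cauchy_bound_aux (hFd z₁) hRpos hbd k
    calc ‖D z₁ k‖ ≤ (k ! : ℝ) * M / R ^ k := this
      _ = (k ! : ℝ) * M * (1 + ‖z₁‖) ^ k := by
          rw [div_eq_mul_inv, ← inv_pow, hR, inv_inv]
  -- vanishing of non-resonant coefficients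
  have hvan : ∀ k, k ≠ m + 1 → ∀ z₁, D z₁ k = 0 := by
    intro k hk z₁
    obtain ⟨e, d, he, hstep⟩ : ∃ (e : ℕ) (d : ℂ), 1 ≤ e ∧
        ∀ y, D y k = b ^ e * D (y + d) k := by
      rcases lt_or_gt_of_ne hk with hlt | hgt
      · -- k < m + 1 : shift down
        refine ⟨m + 1 - k, -c, by omega, fun y => ?_⟩
        have h := hrec (y + -c) k
        rw [neg_add_cancel_right] at h
        have hpow : b ^ m * b = b ^ k * b ^ (m + 1 - k) := by
          rw [← _root_.pow_succ, ← pow_add]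
          congr 1
          omega
        rw [hpow] at h
        have h' : b ^ k * D y k = b ^ k * (b ^ (m + 1 - k) * D (y + -c) k) := by
          rw [h]; ring
        exact mul_left_cancel₀ (pow_ne_zero k hbne) h'
      · -- k > m + 1 : shift up
        refine ⟨k - (m + 1), c, by omega, fun y => ?_⟩
        have h := hrec y k
        have hpow : b ^ k = b ^ m * b * b ^ (k - (m + 1)) := by
          rw [mul_assoc, ← _root_.pow_succ', ← pow_add]
          congr 1
          omega
        rw [hpow] at h
        have h' : (b ^ m * b) * D y k = (b ^ m * b) * (b ^ (k - (m + 1)) * D (y + c) k) := by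
          rw [← h]; ring
        exact mul_left_cancel₀ (mul_ne_zero hbmne hbne) h'
    have hiter : ∀ n : ℕ, D z₁ k = (b ^ e) ^ n * D (z₁ + n * d) k := by
      intro n
      induction n with
      | zero => simp
      | succ n ih =>
        rw [ih, hstep (z₁ + n * d)]
        have : z₁ + (n : ℂ) * d + d = z₁ + ((n : ℕ) + 1 : ℂ) * d := by push_cast; ring
        rw [this]
        push_cast
        ring
    have hbound : ∀ n : ℕ, ‖D z₁ k‖ ≤
        ((k ! : ℝ) * M * (1 + ‖z₁‖ + ‖d‖) ^ k) * (((n : ℝ) + 1) ^ k * ‖b‖ ^ n) := by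
      intro n
      rw [hiter n, norm_mul, norm_pow, norm_pow]
      have hbe : ‖b‖ ^ e ≤ ‖b‖ := by
        calc ‖b‖ ^ e ≤ ‖b‖ ^ 1 := pow_le_pow_of_le_one hnb0.le hnb1.le he
          _ = ‖b‖ := pow_one _
      have h1 : (‖b‖ ^ e) ^ n ≤ ‖b‖ ^ n :=
        pow_le_pow_left₀ (by positivity) hbe n
      have h2 : ‖D (z₁ + n * d) k‖ ≤ (k ! : ℝ) * M * ((1 + ‖z₁‖ + ‖d‖) * ((n : ℝ) + 1)) ^ k := by
        refine (hDbound _ k).trans ?_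
        refine mul_le_mul_of_nonneg_left ?_ (by positivity)
        refine pow_le_pow_left₀ (by positivity) ?_ k
        have : ‖z₁ + (n : ℂ) * d‖ ≤ ‖z₁‖ + n * ‖d‖ := by
          calc ‖z₁ + (n : ℂ) * d‖ ≤ ‖z₁‖ + ‖(n : ℂ) * d‖ := norm_add_le _ _
            _ = ‖z₁‖ + n * ‖d‖ := by
                rw [norm_mul, Complex.norm_natCast]
        have hd0 : (0 : ℝ) ≤ ‖d‖ := norm_nonneg _
        have hz0 : (0 : ℝ) ≤ ‖z₁‖ := norm_nonneg _
        nlinarith [Nat.cast_nonneg (α := ℝ) n]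
      calc (‖b‖ ^ e) ^ n * ‖D (z₁ + n * d) k‖
          ≤ ‖b‖ ^ n * ((k ! : ℝ) * M * ((1 + ‖z₁‖ + ‖d‖) * ((n : ℝ) + 1)) ^ k) := by
            refine mul_le_mul h1 h2 (norm_nonneg _) (by positivity)
        _ = ((k ! : ℝ) * M * (1 + ‖z₁‖ + ‖d‖) ^ k) * (((n : ℝ) + 1) ^ k * ‖b‖ ^ n) := by
            rw [mul_pow]; ring
    have htend : Tendsto
        (fun n : ℕ => ((k ! : ℝ) * M * (1 + ‖z₁‖ + ‖d‖) ^ k) * (((n : ℝ) + 1) ^ k * ‖b‖ ^ n))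
        atTop (𝓝 0) := by
      have h0 : Tendsto (fun n : ℕ => (n : ℝ) ^ k * ‖b‖ ^ n) atTop (𝓝 0) :=
        tendsto_pow_const_mul_const_pow_of_abs_lt_one k (by rwa [abs_of_nonneg hnb0.le])
      have h1 : Tendsto (fun n : ℕ => ((n + 1 : ℕ) : ℝ) ^ k * ‖b‖ ^ (n + 1)) atTop (𝓝 0) :=
        h0.comp (tendsto_add_atTop_nat 1)
      have h2 : Tendsto (fun n : ℕ => (((n : ℝ) + 1) ^ k * ‖b‖ ^ n)) atTop (𝓝 0) := by
        have h3 : Tendsto (fun n : ℕ => (((n + 1 : ℕ) : ℝ) ^ k * ‖b‖ ^ (n + 1)) * ‖b‖⁻¹)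
            atTop (𝓝 (0 * ‖b‖⁻¹)) := h1.mul_const _
        rw [zero_mul] at h3
        refine h3.congr fun n => ?_
        push_cast
        field_simp
        ring
      have := h2.const_mul ((k ! : ℝ) * M * (1 + ‖z₁‖ + ‖d‖) ^ k)
      simpa using this
    have : ‖D z₁ k‖ ≤ 0 := ge_of_tendsto' htend hbound
    have := le_antisymm this (norm_nonneg _)
    exact norm_eq_zero.mp this
  -- Taylor expansion
  intro z₁ w
  have hFw : ∀ w' : ℂ, F z₁ w' = (((m + 1)! : ℂ))⁻¹ * D z₁ (m + 1) * w' ^ (m + 1) := by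
    intro w'
    have hsum := Complex.taylorSeries_eq_of_entire' (c := 0) (z := w') (hFd z₁)
    rw [← hsum, tsum_eq_single (m + 1) ?_]
    · rw [sub_zero]
    · intro k hk
      rw [show iteratedDeriv k (F z₁) 0 = D z₁ k from rfl, hvan k hk]
      ring
  have hF1 : f (z₁, 1, t) = (((m + 1)! : ℂ))⁻¹ * D z₁ (m + 1) := by
    have h := hFw 1
    simp only [hF, one_pow, mul_one] at h
    exact h
  have h := hFw w
  simp only [hF] at h
  rw [h, hF1]

/-- The coefficient of an invariant holomorphic bivector field on the family of Hopf
surfaces: if `f : ℂ³ → ℂ` is holomorphic, `0 < |b| < 1`, `a = b^m` with `m ≥ 1`, and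
`f(a z₁ + t z₂^m, b z₂, t) = a b f(z₁, z₂, t)`, then `f(z₁, z₂, t) = g(t) z₂^(m+1)` for some
holomorphic `g : ℂ → ℂ`. -/
theorem stmt16 (m : ℕ) (hm : 1 ≤ m) (b : ℂ) (hb0 : 0 < ‖b‖)
    (hb1 : ‖b‖ < 1)
    (f : ℂ × ℂ × ℂ → ℂ) (hf : Differentiable ℂ f)
    (heq : ∀ z₁ z₂ t : ℂ,
      f (b ^ m * z₁ + t * z₂ ^ m, b * z₂, t) = b ^ m * b * f (z₁, z₂, t)) :
    ∃ g : ℂ → ℂ, Differentiable ℂ g ∧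
      ∀ z₁ z₂ t : ℂ, f (z₁, z₂, t) = g t * z₂ ^ (m + 1) := by
  have hbne : b ≠ 0 := by
    intro h; rw [h] at hb0; simp at hb0
  have hbmne : b ^ m ≠ 0 := pow_ne_zero _ hbne
  have key := key_aux m hm b hb0 hb1 f hf heq
  -- periodicity in z₁ of f (·, 1, t)
  have hper : ∀ z₁ t : ℂ, f (z₁ + t / b ^ m, 1, t) = f (z₁, 1, t) := by
    intro z₁ t
    have harg : (z₁ + t / b ^ m) * b ^ m = b ^ m * z₁ + t * 1 ^ m := by
      field_simp
      ring
    have h1 : f (b ^ m * z₁ + t * 1 ^ m, b, t) = f (z₁ + t / b ^ m, 1, t) * b ^ (m + 1) := by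
      rw [← harg]; exact key t (z₁ + t / b ^ m) b
    have h2 : f (b ^ m * z₁ + t * 1 ^ m, b, t) = b ^ m * b * f (z₁, 1, t) := by
      have := heq z₁ 1 t
      rwa [mul_one] at this
    have hbm1 : (b : ℂ) ^ (m + 1) ≠ 0 := pow_ne_zero _ hbne
    have h3 : f (z₁ + t / b ^ m, 1, t) * b ^ (m + 1) = f (z₁, 1, t) * b ^ (m + 1) := by
      rw [← h1, h2, _root_.pow_succ]
      ring
    exact mul_right_cancel₀ hbm1 h3
  have hpern : ∀ (n : ℕ) (t : ℂ), f ((n : ℂ) * (t / b ^ m), 1, t) = f (0, 1, t) := by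
    intro n t
    induction n with
    | zero => simp
    | succ n ih =>
      have : ((n : ℕ) + 1 : ℂ) * (t / b ^ m) = (n : ℂ) * (t / b ^ m) + t / b ^ m := by
        push_cast; ring
      rw [show (((n + 1 : ℕ)) : ℂ) = ((n : ℕ) + 1 : ℂ) by push_cast; ring, this,
        hper ((n : ℂ) * (t / b ^ m)) t, ih]
  have hconst : ∀ z₁ t : ℂ, f (z₁, 1, t) = f (0, 1, t) := by
    intro z₁ t
    rcases eq_or_ne z₁ 0 with rfl | hz
    · rfl
    have hu : Differentiable ℂ (fun s : ℂ => f (z₁, 1, s)) := hf.comp (by fun_prop)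
    have hv : Differentiable ℂ (fun s : ℂ => f (0, 1, s)) := hf.comp (by fun_prop)
    have hu' : AnalyticOnNhd ℂ (fun s : ℂ => f (z₁, 1, s)) Set.univ :=
      hu.differentiableOn.analyticOnNhd isOpen_univ
    have hv' : AnalyticOnNhd ℂ (fun s : ℂ => f (0, 1, s)) Set.univ :=
      hv.differentiableOn.analyticOnNhd isOpen_univ
    have hseq : Tendsto (fun n : ℕ => b ^ m * z₁ / ((n : ℂ) + 1)) atTop (𝓝[≠] (0 : ℂ)) := by
      rw [tendsto_nhdsWithin_iff]
      constructor
      · have hnorm : Tendsto (fun n : ℕ => ‖b ^ m * z₁ / ((n : ℂ) + 1)‖) atTop (𝓝 0) := by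
          have h1 : Tendsto (fun n : ℕ => ‖b ^ m * z₁‖ * (1 / ((n : ℝ) + 1))) atTop
              (𝓝 (‖b ^ m * z₁‖ * 0)) :=
            tendsto_one_div_add_atTop_nhds_zero_nat.const_mul _
          rw [mul_zero] at h1
          refine h1.congr fun n => ?_
          rw [norm_div, mul_one_div]
          congr 1
          rw [show ((n : ℂ) + 1) = ((n + 1 : ℕ) : ℂ) by push_cast; ring]
          rw [Complex.norm_natCast]
          push_cast
          ring
        exact tendsto_zero_iff_norm_tendsto_zero.mpr hnorm
      · filter_upwards with n
        refine Set.mem_compl_singleton_iff.mpr ?_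
        apply div_ne_zero (mul_ne_zero hbmne hz)
        exact Nat.cast_add_one_ne_zero n
    have hfreq : ∃ᶠ s in 𝓝[≠] (0 : ℂ), (fun s : ℂ => f (z₁, 1, s)) s
        = (fun s : ℂ => f (0, 1, s)) s := by
      refine hseq.frequently (Frequently.of_forall fun n => ?_)
      have hne : ((n : ℂ) + 1) ≠ 0 := Nat.cast_add_one_ne_zero n
      have harg : ((n + 1 : ℕ) : ℂ) * ((b ^ m * z₁ / ((n : ℂ) + 1)) / b ^ m) = z₁ := by
        push_cast
        field_simp
      have := hpern (n + 1) (b ^ m * z₁ / ((n : ℂ) + 1))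
      rw [harg] at this
      exact this
    have := hu'.eqOn_of_preconnected_of_frequently_eq hv' isPreconnected_univ
      (Set.mem_univ (0 : ℂ)) hfreq
    exact this (Set.mem_univ t)
  refine ⟨fun t => f (0, 1, t), hf.comp (by fun_prop), ?_⟩
  intro z₁ z₂ t
  have hmain : ∀ w : ℂ, w ≠ 0 → f (z₁, w, t) = f (0, 1, t) * w ^ (m + 1) := by
    intro w hw
    have h := key t (z₁ / w ^ m) w
    rw [div_mul_cancel₀ _ (pow_ne_zero m hw)] at h
    rw [h, hconst (z₁ / w ^ m) t]
  have hcont1 : Continuous fun w : ℂ => f (z₁, w, t) := hf.continuous.comp (by fun_prop)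
  have hcont2 : Continuous fun w : ℂ => f (0, 1, t) * w ^ (m + 1) := by fun_prop
  have hdense : Dense ({(0 : ℂ)}ᶜ : Set ℂ) := dense_compl_singleton _
  have := hcont1.ext_on hdense hcont2 fun w hw =>
    hmain w (Set.mem_compl_singleton_iff.mp hw)
  exact congrFun this z₂
end
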